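/- arXiv:0905.3460 — 2 statements merged into one kernel-verified Lean document; each statement's English description precedes it below -/
import Mathlib

section
/- Let θ ∈ (0, π/2), let u be a model eigenfunction of H(θ) with eigenvalue σ, and assume: (a) e^{α₀(t+⟨s⟩)} u ∈ H¹(ℝ²₊) for some α₀ > 0, where ⟨s⟩ = (s²+1)^{1/2}; (b) the spectral gap condition: there exists δ > 0 such that every smooth Schwartz-class w on ℝ²₊ with ∂_t w(s,0) = 0 for all s and ∫_{ℝ²₊} w u ds dt = 0 satisfies ∫_{ℝ²₊} (|∂_s w|² + |∂_t w|² + V_θ² w²) ds dt ≥ (σ + δ) ∫_{ℝ²₊} w² ds dt. Then u belongs to H^∞_exp: for every pair of nonnegative integers (ℓ, k) there exists α > 0 such that e^{α(t+⟨s⟩)} ∂_s^ℓ ∂_t^k u ∈ L²(ℝ²₊). -/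
open Real MeasureTheory Set

noncomputable section

/-- Partial derivative with respect to the first variable. -/
def pd1 (u : ℝ → ℝ → ℝ) : ℝ → ℝ → ℝ := fun s t => deriv (fun x => u x t) s

/-- Partial derivative with respect to the second variable. -/
def pd2 (u : ℝ → ℝ → ℝ) : ℝ → ℝ → ℝ := fun s t => deriv (fun y => u s y) t

/-- The potential `V_θ(s,t) = t cos θ − s sin θ`. -/
def Vpot (θ : ℝ) : ℝ → ℝ → ℝ := fun s t => t * Real.cos θ - s * Real.sin θ

/-- The operator `H(θ) = −∂_s² − ∂_t² + V_θ²` applied to `u`. -/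
def Hop (θ : ℝ) (u : ℝ → ℝ → ℝ) : ℝ → ℝ → ℝ :=
  fun s t => - pd1 (pd1 u) s t - pd2 (pd2 u) s t + (Vpot θ s t)^2 * u s t

/-- Integral over the half-plane `{t > 0}` with respect to `ds dt`. -/
def intHalf (f : ℝ → ℝ → ℝ) : ℝ := ∫ s : ℝ, ∫ t in Set.Ioi (0:ℝ), f s t

/-- Schwartz-class on the closed half-plane: all iterated partial derivatives decay
faster than any power of `|s| + t`. -/
def SchwartzHalf (u : ℝ → ℝ → ℝ) : Prop :=
  ∀ k l n : ℕ, ∃ C : ℝ, ∀ s t : ℝ, 0 ≤ t →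
    |pd1^[k] (pd2^[l] u) s t| ≤ C * (1 + |s| + t) ^ (-(n:ℝ))

/-- A model eigenfunction of `H(θ)` with eigenvalue `σ`: smooth up to the boundary,
Schwartz-class, `L²`-normalized, Neumann boundary condition, and `H(θ)u = σu` on `{t ≥ 0}`. -/
structure IsModelEigen (θ : ℝ) (u : ℝ → ℝ → ℝ) (σ : ℝ) : Prop where
  smooth : ∀ n : ℕ, ContDiff ℝ n (fun p : ℝ × ℝ => u p.1 p.2)
  schwartz : SchwartzHalf u
  normalized : intHalf (fun s t => (u s t)^2) = 1
  neumann : ∀ s : ℝ, pd2 u s 0 = 0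
  eigen : ∀ s t : ℝ, 0 ≤ t → Hop θ u s t = σ * u s t

/-- Square-integrability on the half-plane `{t > 0}`. -/
def L2Half (f : ℝ → ℝ → ℝ) : Prop :=
  MeasureTheory.IntegrableOn (fun p : ℝ × ℝ => (f p.1 p.2)^2)
    ((Set.univ : Set ℝ) ×ˢ Set.Ioi (0:ℝ)) volume

/-- The exponentially weighted function `e^{α(t+⟨s⟩)} f` with `⟨s⟩ = (s²+1)^{1/2}`. -/
def expWeight (α : ℝ) (f : ℝ → ℝ → ℝ) : ℝ → ℝ → ℝ :=
  fun s t => Real.exp (α * (t + Real.sqrt (s^2 + 1))) * f s t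

/-- `H¹`-membership on the half-plane (for functions smooth up to the boundary):
the function and its first partial derivatives are in `L²(ℝ²₊)`. -/
def H1Half (f : ℝ → ℝ → ℝ) : Prop :=
  L2Half f ∧ L2Half (pd1 f) ∧ L2Half (pd2 f)

/-! ### Auxiliary machinery -/

abbrev Smooth2 (g : ℝ → ℝ → ℝ) : Prop := ∀ n : ℕ, ContDiff ℝ n (fun p : ℝ × ℝ => g p.1 p.2)

lemma smooth2_top {g : ℝ → ℝ → ℝ} (h : Smooth2 g) :
    ContDiff ℝ ((⊤ : ℕ∞) : WithTop ℕ∞) (fun p : ℝ × ℝ => g p.1 p.2) :=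
  contDiff_infty.2 h

lemma hasDerivAt_slice1 {g : ℝ → ℝ → ℝ} (h : Smooth2 g) (s t : ℝ) :
    HasDerivAt (fun x => g x t) (fderiv ℝ (fun p : ℝ × ℝ => g p.1 p.2) (s, t) (1, 0)) s := by
  have hd : HasFDerivAt (fun p : ℝ × ℝ => g p.1 p.2)
      (fderiv ℝ (fun p : ℝ × ℝ => g p.1 p.2) (s, t)) (s, t) :=
    ((h 1).differentiable (by norm_num)).differentiableAt.hasFDerivAt
  have hline : HasDerivAt (fun x : ℝ => (x, t)) ((1 : ℝ), (0 : ℝ)) s :=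
    (hasDerivAt_id s).prodMk (hasDerivAt_const s t)
  exact hd.comp_hasDerivAt s hline

lemma hasDerivAt_slice2 {g : ℝ → ℝ → ℝ} (h : Smooth2 g) (s t : ℝ) :
    HasDerivAt (fun y => g s y) (fderiv ℝ (fun p : ℝ × ℝ => g p.1 p.2) (s, t) (0, 1)) t := by
  have hd : HasFDerivAt (fun p : ℝ × ℝ => g p.1 p.2)
      (fderiv ℝ (fun p : ℝ × ℝ => g p.1 p.2) (s, t)) (s, t) :=
    ((h 1).differentiable (by norm_num)).differentiableAt.hasFDerivAt
  have hline : HasDerivAt (fun y : ℝ => (s, y)) ((0 : ℝ), (1 : ℝ)) t :=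
    (hasDerivAt_const t s).prodMk (hasDerivAt_id t)
  exact hd.comp_hasDerivAt t hline

lemma pd1_eq {g : ℝ → ℝ → ℝ} (h : Smooth2 g) (s t : ℝ) :
    pd1 g s t = fderiv ℝ (fun p : ℝ × ℝ => g p.1 p.2) (s, t) (1, 0) :=
  (hasDerivAt_slice1 h s t).deriv

lemma pd2_eq {g : ℝ → ℝ → ℝ} (h : Smooth2 g) (s t : ℝ) :
    pd2 g s t = fderiv ℝ (fun p : ℝ × ℝ => g p.1 p.2) (s, t) (0, 1) :=
  (hasDerivAt_slice2 h s t).deriv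

lemma hasDerivAt_pd1 {g : ℝ → ℝ → ℝ} (h : Smooth2 g) (s t : ℝ) :
    HasDerivAt (fun x => g x t) (pd1 g s t) s := by
  rw [pd1_eq h]; exact hasDerivAt_slice1 h s t

lemma hasDerivAt_pd2 {g : ℝ → ℝ → ℝ} (h : Smooth2 g) (s t : ℝ) :
    HasDerivAt (fun y => g s y) (pd2 g s t) t := by
  rw [pd2_eq h]; exact hasDerivAt_slice2 h s t

lemma smooth2_pd1 {g : ℝ → ℝ → ℝ} (h : Smooth2 g) : Smooth2 (pd1 g) := by
  intro n
  have h1 : ContDiff ℝ n (fun p : ℝ × ℝ =>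
      fderiv ℝ (fun q : ℝ × ℝ => g q.1 q.2) p ((1 : ℝ), (0 : ℝ))) := by
    have := (smooth2_top h).fderiv_right (m := (n : WithTop ℕ∞)) (by exact_mod_cast le_top)
    exact this.clm_apply contDiff_const
  have he : (fun p : ℝ × ℝ => pd1 g p.1 p.2) = (fun p : ℝ × ℝ =>
      fderiv ℝ (fun q : ℝ × ℝ => g q.1 q.2) p ((1 : ℝ), (0 : ℝ))) :=
    funext fun p => pd1_eq h p.1 p.2
  rw [he]; exact h1

lemma smooth2_pd2 {g : ℝ → ℝ → ℝ} (h : Smooth2 g) : Smooth2 (pd2 g) := by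
  intro n
  have h1 : ContDiff ℝ n (fun p : ℝ × ℝ =>
      fderiv ℝ (fun q : ℝ × ℝ => g q.1 q.2) p ((0 : ℝ), (1 : ℝ))) := by
    have := (smooth2_top h).fderiv_right (m := (n : WithTop ℕ∞)) (by exact_mod_cast le_top)
    exact this.clm_apply contDiff_const
  have he : (fun p : ℝ × ℝ => pd2 g p.1 p.2) = (fun p : ℝ × ℝ =>
      fderiv ℝ (fun q : ℝ × ℝ => g q.1 q.2) p ((0 : ℝ), (1 : ℝ))) :=
    funext fun p => pd2_eq h p.1 p.2
  rw [he]; exact h1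

/-! ### A Landau-type inequality -/

lemma landau_basic {f f' f'' : ℝ → ℝ} {x₀ h A B : ℝ} (hh : 0 < h)
    (hd1 : ∀ x ∈ Icc x₀ (x₀ + h), HasDerivAt f (f' x) x)
    (hd2 : ∀ x ∈ Icc x₀ (x₀ + h), HasDerivAt f' (f'' x) x)
    (hA : ∀ x ∈ Icc x₀ (x₀ + h), |f x| ≤ A)
    (hB : ∀ x ∈ Icc x₀ (x₀ + h), |f'' x| ≤ B) :
    |f' x₀| ≤ 2 * A / h + B * h := by
  have hmem : x₀ ∈ Icc x₀ (x₀ + h) := ⟨le_refl _, by linarith⟩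
  have hmem' : x₀ + h ∈ Icc x₀ (x₀ + h) := ⟨by linarith, le_refl _⟩
  have hf'lip : ∀ x ∈ Icc x₀ (x₀ + h), |f' x - f' x₀| ≤ B * (x - x₀) := by
    intro x hx
    have := norm_image_sub_le_of_norm_deriv_le_segment'
      (f := f') (f' := f'') (C := B)
      (fun y hy => (hd2 y hy).hasDerivWithinAt)
      (fun y hy => by simpa [Real.norm_eq_abs] using hB y (Ico_subset_Icc_self hy)) x hx
    simpa [Real.norm_eq_abs] using this
  set g : ℝ → ℝ := fun x => f x - f x₀ - (x - x₀) * f' x₀ with hg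
  have hgd : ∀ x ∈ Icc x₀ (x₀ + h), HasDerivWithinAt g (f' x - f' x₀) (Icc x₀ (x₀ + h)) x := by
    intro x hx
    have : HasDerivAt g (f' x - f' x₀) x := by
      have h1 := (hd1 x hx).sub_const (f x₀)
      have h2 : HasDerivAt (fun y : ℝ => (y - x₀) * f' x₀) (f' x₀) x := by
        simpa using ((hasDerivAt_id x).sub_const x₀).mul_const (f' x₀)
      exact h1.sub h2
    exact this.hasDerivWithinAt
  have hgB : ∀ x ∈ Ico x₀ (x₀ + h), ‖f' x - f' x₀‖ ≤ B * h := by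
    intro x hx
    have h1 := hf'lip x (Ico_subset_Icc_self hx)
    have hB0 : 0 ≤ B := le_trans (abs_nonneg _) (hB x₀ hmem)
    have : B * (x - x₀) ≤ B * h := by
      apply mul_le_mul_of_nonneg_left _ hB0
      have := hx.2; have := hx.1; linarith
    rw [Real.norm_eq_abs]; linarith
  have hgend := norm_image_sub_le_of_norm_deriv_le_segment' hgd hgB (x₀ + h) hmem'
  have hgx₀ : g x₀ = 0 := by simp [hg]
  have hgval : g (x₀ + h) = f (x₀ + h) - f x₀ - h * f' x₀ := by simp [hg]
  rw [hgx₀, sub_zero, hgval, Real.norm_eq_abs] at hgend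
  have h2A : |f (x₀ + h) - f x₀| ≤ 2 * A := by
    calc |f (x₀ + h) - f x₀| ≤ |f (x₀ + h)| + |f x₀| := abs_sub _ _
      _ ≤ 2 * A := by linarith [hA (x₀ + h) hmem', hA x₀ hmem]
  have hmain : |h * f' x₀| ≤ 2 * A + B * h * h := by
    have h4 : h * f' x₀ = (f (x₀ + h) - f x₀) - (f (x₀ + h) - f x₀ - h * f' x₀) := by ring
    calc |h * f' x₀|
        = |(f (x₀ + h) - f x₀) - (f (x₀ + h) - f x₀ - h * f' x₀)| := by rw [← h4]
      _ ≤ |f (x₀ + h) - f x₀| + |f (x₀ + h) - f x₀ - h * f' x₀| := abs_sub _ _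
      _ ≤ 2 * A + B * h * h := by nlinarith [hgend, h2A]
  rw [abs_mul, abs_of_pos hh] at hmain
  rw [div_add' _ _ _ (ne_of_gt hh)]
  rw [le_div_iff₀ hh]
  nlinarith [abs_nonneg (f' x₀)]

lemma landau_decay_1d {f f' f'' : ℝ → ℝ} {x₀ A B Amax : ℝ}
    (hd1 : ∀ x ∈ Icc x₀ (x₀ + 1), HasDerivAt f (f' x) x)
    (hd2 : ∀ x ∈ Icc x₀ (x₀ + 1), HasDerivAt f' (f'' x) x)
    (hA0 : 0 < A) (hAm : A ≤ Amax)
    (hA : ∀ x ∈ Icc x₀ (x₀ + 1), |f x| ≤ A)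
    (hB : ∀ x ∈ Icc x₀ (x₀ + 1), |f'' x| ≤ B) :
    |f' x₀| ≤ 3 * max (Real.sqrt (max B 1)) (Real.sqrt Amax) * Real.sqrt A := by
  set B' : ℝ := max B 1 with hB'
  have hB'0 : (0 : ℝ) < B' := lt_of_lt_of_le one_pos (le_max_right _ _)
  have hBB' : B ≤ B' := le_max_left _ _
  set h : ℝ := min 1 (Real.sqrt (A / B')) with hhdef
  have hs0 : 0 < Real.sqrt (A / B') := Real.sqrt_pos.2 (div_pos hA0 hB'0)
  have hh0 : 0 < h := lt_min one_pos hs0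
  have hh1 : h ≤ 1 := min_le_left _ _
  have hsub : Icc x₀ (x₀ + h) ⊆ Icc x₀ (x₀ + 1) := Icc_subset_Icc le_rfl (by linarith)
  have hbasic := landau_basic hh0 (fun x hx => hd1 x (hsub hx)) (fun x hx => hd2 x (hsub hx))
    (fun x hx => hA x (hsub hx)) (fun x hx => hB x (hsub hx))
  set sA := Real.sqrt A with hsA
  set sB := Real.sqrt B' with hsB
  have hsA0 : 0 < sA := Real.sqrt_pos.2 hA0
  have hsB0 : 0 < sB := Real.sqrt_pos.2 hB'0
  have hsAsq : sA ^ 2 = A := Real.sq_sqrt hA0.le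
  have hsBsq : sB ^ 2 = B' := Real.sq_sqrt hB'0.le
  have hdiv : Real.sqrt (A / B') = sA / sB := Real.sqrt_div hA0.le _
  rcases le_or_gt A B' with hcase | hcase
  · have hle1 : Real.sqrt (A / B') ≤ 1 := by
      rw [hdiv, div_le_one hsB0]
      exact Real.sqrt_le_sqrt hcase
    have hheq : h = sA / sB := by rw [hhdef, min_eq_right hle1, hdiv]
    rw [hheq] at hbasic
    have key : 2 * A / (sA / sB) + B * (sA / sB) ≤ 3 * sB * sA := by
      have h1 : 2 * A / (sA / sB) = 2 * sA * sB := by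
        rw [← hsAsq]; field_simp
      have h2 : B * (sA / sB) ≤ sB * sA := by
        rw [mul_div_assoc'] at *
        rw [div_le_iff₀ hsB0]
        nlinarith [hsBsq, hBB', hsA0.le, hsB0.le]
      linarith
    calc |f' x₀| ≤ 2 * A / (sA / sB) + B * (sA / sB) := hbasic
      _ ≤ 3 * sB * sA := key
      _ ≤ 3 * max sB (Real.sqrt Amax) * sA := by nlinarith [le_max_left sB (Real.sqrt Amax)]
  · have hgt1 : (1:ℝ) ≤ Real.sqrt (A / B') := by
      rw [hdiv, le_div_iff₀ hsB0, one_mul]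
      exact Real.sqrt_le_sqrt hcase.le
    have hheq : h = 1 := by rw [hhdef, min_eq_left hgt1]
    rw [hheq] at hbasic
    have hAmax : sA ≤ Real.sqrt Amax := Real.sqrt_le_sqrt hAm
    have h5 : 2 * A / 1 + B * 1 ≤ 3 * A := by
      rw [div_one, mul_one]; linarith
    calc |f' x₀| ≤ 2 * A / 1 + B * 1 := hbasic
      _ ≤ 3 * A := h5
      _ = 3 * sA * sA := by rw [← hsAsq]; ring
      _ ≤ 3 * max sB (Real.sqrt Amax) * sA := by
          nlinarith [le_max_right sB (Real.sqrt Amax), hsA0.le]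

/-! ### The weight function and pointwise decay -/

lemma sqrt1_lip (s s₀ : ℝ) : |Real.sqrt (s^2+1) - Real.sqrt (s₀^2+1)| ≤ |s - s₀| := by
  set A := Real.sqrt (s^2+1) with hA
  set B := Real.sqrt (s₀^2+1) with hB
  have hA1 : 1 ≤ A := by
    have := Real.sqrt_le_sqrt (show (1:ℝ) ≤ s^2+1 by nlinarith)
    rwa [Real.sqrt_one] at this
  have hB1 : 1 ≤ B := by
    have := Real.sqrt_le_sqrt (show (1:ℝ) ≤ s₀^2+1 by nlinarith)
    rwa [Real.sqrt_one] at this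
  have hAsq : A^2 = s^2+1 := Real.sq_sqrt (by positivity)
  have hBsq : B^2 = s₀^2+1 := Real.sq_sqrt (by positivity)
  have hsA : |s| ≤ A := by
    rw [hA, show |s| = Real.sqrt (s^2) by rw [Real.sqrt_sq_eq_abs]]
    exact Real.sqrt_le_sqrt (by nlinarith)
  have hsB : |s₀| ≤ B := by
    rw [hB, show |s₀| = Real.sqrt (s₀^2) by rw [Real.sqrt_sq_eq_abs]]
    exact Real.sqrt_le_sqrt (by nlinarith)
  rw [abs_le]
  constructor
  · nlinarith [neg_abs_le (s - s₀), le_abs_self (s - s₀),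
      neg_abs_le s, le_abs_self s, neg_abs_le s₀, le_abs_self s₀, abs_nonneg (s - s₀)]
  · nlinarith [neg_abs_le (s - s₀), le_abs_self (s - s₀),
      neg_abs_le s, le_abs_self s, neg_abs_le s₀, le_abs_self s₀, abs_nonneg (s - s₀)]

/-- The weight `φ(s,t) = t + √(s²+1)`. -/
def phi (s t : ℝ) : ℝ := t + Real.sqrt (s^2+1)

lemma phi_nonneg (s t : ℝ) (ht : 0 ≤ t) : 0 ≤ phi s t := by
  have : (0:ℝ) ≤ Real.sqrt (s^2+1) := Real.sqrt_nonneg _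
  unfold phi; linarith

lemma phi_lip {s t s' t' : ℝ} : |phi s t - phi s' t'| ≤ |s - s'| + |t - t'| := by
  unfold phi
  have h1 := sqrt1_lip s s'
  calc |t + Real.sqrt (s^2+1) - (t' + Real.sqrt (s'^2+1))|
      = |(t - t') + (Real.sqrt (s^2+1) - Real.sqrt (s'^2+1))| := by ring_nf
    _ ≤ |t - t'| + |Real.sqrt (s^2+1) - Real.sqrt (s'^2+1)| := abs_add_le _ _
    _ ≤ |s - s'| + |t - t'| := by linarith

lemma pointwise_decay_of_L2 {g : ℝ → ℝ → ℝ} {α L S : ℝ} (hα : 0 < α)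
    (hL : 0 < L) (hS : 0 < S)
    (hlip : ∀ s t s' t', 0 ≤ t → 0 ≤ t' → |g s t - g s' t'| ≤ L * (|s - s'| + |t - t'|))
    (hsup : ∀ s t : ℝ, 0 ≤ t → |g s t| ≤ S)
    (hint : MeasureTheory.IntegrableOn
      (fun p : ℝ × ℝ => (Real.exp (α * phi p.1 p.2) * g p.1 p.2)^2)
      ((Set.univ : Set ℝ) ×ˢ Set.Ioi (0:ℝ)) volume) :
    ∃ C : ℝ, ∀ s t : ℝ, 0 ≤ t → |g s t| ≤ C * Real.exp (-(α/2) * phi s t) := by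
  set F : ℝ × ℝ → ℝ := fun p => (Real.exp (α * phi p.1 p.2) * g p.1 p.2)^2 with hF
  set M : ℝ := ∫ p in (Set.univ : Set ℝ) ×ˢ Set.Ioi (0:ℝ), F p with hM
  have hM0 : 0 ≤ M := by
    apply MeasureTheory.setIntegral_nonneg
    · exact MeasurableSet.univ.prod measurableSet_Ioi
    · intro p _; positivity
  set K : ℝ := 4 * (4*L + S)^2 * M * Real.exp (4 * α) with hK
  set C : ℝ := max K 1 with hC
  have hC1 : (1:ℝ) ≤ C := le_max_right _ _
  have hCK : K ≤ C := le_max_left _ _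
  refine ⟨C, ?_⟩
  intro s₀ t₀ ht₀
  set a := |g s₀ t₀| with ha
  rcases eq_or_lt_of_le (abs_nonneg (g s₀ t₀)) with haz | hapos
  · rw [← ha] at haz; rw [← haz]; positivity
  rw [← ha] at hapos
  set r : ℝ := min 1 (a / (4*L)) with hr
  have haS : a ≤ S := hsup s₀ t₀ ht₀
  have hr0 : 0 < r := lt_min one_pos (by positivity)
  have hr1 : r ≤ 1 := min_le_left _ _
  have hrL : L * (2*r) ≤ a / 2 := by
    have h' : r ≤ a / (4*L) := min_le_right _ _
    calc L * (2*r) ≤ L * (2 * (a/(4*L))) := by nlinarith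
      _ = a / 2 := by field_simp; ring
  have hrlow : a / (4*L + S) ≤ r := by
    rcases le_total 1 (a / (4*L)) with h' | h'
    · rw [hr, min_eq_left h']
      calc a / (4*L + S) ≤ S / (4*L + S) := by gcongr
        _ ≤ 1 := by rw [div_le_one (by positivity)]; linarith
    · rw [hr, min_eq_right h']
      gcongr <;> linarith
  set Q : Set (ℝ × ℝ) := Set.Ioc s₀ (s₀ + r) ×ˢ Set.Ioc t₀ (t₀ + r) with hQ
  have hQsub : Q ⊆ (Set.univ : Set ℝ) ×ˢ Set.Ioi (0:ℝ) := by
    rintro ⟨x, y⟩ ⟨hx, hy⟩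
    exact ⟨trivial, lt_of_le_of_lt ht₀ hy.1⟩
  have hQm : MeasurableSet Q := measurableSet_Ioc.prod measurableSet_Ioc
  have hvolQ : (volume Q).toReal = r * r := by
    rw [hQ, MeasureTheory.Measure.volume_eq_prod, MeasureTheory.Measure.prod_prod,
      Real.volume_Ioc, Real.volume_Ioc,
      show s₀ + r - s₀ = r by ring, show t₀ + r - t₀ = r by ring,
      ← ENNReal.ofReal_mul hr0.le, ENNReal.toReal_ofReal (by positivity)]
  have hvolQne : volume Q ≠ ⊤ := by
    rw [hQ, MeasureTheory.Measure.volume_eq_prod, MeasureTheory.Measure.prod_prod,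
      Real.volume_Ioc, Real.volume_Ioc]
    exact ENNReal.mul_ne_top ENNReal.ofReal_ne_top ENNReal.ofReal_ne_top
  set e1 : ℝ := Real.exp (α * (phi s₀ t₀ - 2)) with he1
  have hclow : ∀ p ∈ Q, (e1 * (a/2))^2 ≤ F p := by
    rintro ⟨x, y⟩ ⟨hx, hy⟩
    have hy0 : 0 ≤ y := le_trans ht₀ (le_of_lt hy.1)
    have hdx : |x - s₀| ≤ r := abs_le.2 ⟨by linarith [hx.1], by linarith [hx.2]⟩
    have hdy : |y - t₀| ≤ r := abs_le.2 ⟨by linarith [hy.1], by linarith [hy.2]⟩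
    have hglb : a / 2 ≤ |g x y| := by
      have h1 := hlip x y s₀ t₀ hy0 ht₀
      have h2 : L * (|x - s₀| + |y - t₀|) ≤ L * (2*r) := by nlinarith
      have h3 := abs_sub_abs_le_abs_sub (g s₀ t₀) (g x y)
      rw [abs_sub_comm (g s₀ t₀) (g x y)] at h3
      linarith
    have hphi : phi s₀ t₀ - 2 ≤ phi x y := by
      have h1 := phi_lip (s := x) (t := y) (s' := s₀) (t' := t₀)
      have h2 := neg_abs_le (phi x y - phi s₀ t₀)
      linarith
    have hexp : e1 ≤ Real.exp (α * phi x y) := by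
      rw [he1]; exact Real.exp_le_exp.2 (by nlinarith)
    have hprod : e1 * (a/2) ≤ Real.exp (α * phi x y) * |g x y| := by
      apply mul_le_mul hexp hglb (by positivity) (Real.exp_nonneg _)
    have h6 : (e1 * (a/2))^2 ≤ (Real.exp (α * phi x y) * |g x y|)^2 := by
      apply pow_le_pow_left₀ (by positivity) hprod
    calc (e1 * (a/2))^2 ≤ (Real.exp (α * phi x y) * |g x y|)^2 := h6
      _ = F (x, y) := by rw [hF]; simp only [mul_pow, sq_abs]
  have hIQ : MeasureTheory.IntegrableOn F Q volume := hint.mono_set hQsub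
  have h1 : (e1 * (a/2))^2 * (volume Q).toReal ≤ ∫ p in Q, F p :=
    by have := MeasureTheory.setIntegral_ge_of_const_le hQm hvolQne hclow hIQ
       rw [smul_eq_mul, mul_comm] at this; exact this
  have h2 : (∫ p in Q, F p) ≤ M := by
    rw [hM]
    apply MeasureTheory.setIntegral_mono_set hint
    · exact MeasureTheory.ae_of_all _ (fun p => by positivity)
    · exact HasSubset.Subset.eventuallyLE hQsub
  rw [hvolQ] at h1
  have hstep : e1^2 * a^4 ≤ 4 * (4*L + S)^2 * M := by
    set ρ : ℝ := a / (4*L + S) with hρ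
    have hρ0 : 0 < ρ := by positivity
    have hrr : ρ * ρ ≤ r * r := by nlinarith
    have h3a : (e1 * (a/2))^2 * (ρ * ρ) ≤ (e1 * (a/2))^2 * (r * r) :=
      mul_le_mul_of_nonneg_left hrr (sq_nonneg _)
    have h3 : (e1 * (a/2))^2 * (ρ * ρ) ≤ M := le_trans h3a (le_trans h1 h2)
    have h4 : (e1 * (a/2))^2 * (ρ * ρ) = e1^2 * a^4 / (4 * (4*L + S)^2) := by
      rw [hρ]; field_simp; ring
    rw [h4] at h3
    rw [div_le_iff₀ (by positivity)] at h3
    linarith [h3]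
  set y : ℝ := Real.exp (-(α/2) * phi s₀ t₀) with hy
  have hy0 : 0 < y := Real.exp_pos _
  have hkey : e1^2 * (y^4 * Real.exp (4*α)) = 1 := by
    rw [he1, hy]
    simp only [pow_succ, pow_zero, one_mul, ← Real.exp_add]
    rw [Real.exp_eq_one_iff]
    ring
  have ha4 : a^4 ≤ K * y^4 := by
    have h5 : e1^2 * a^4 * (y^4 * Real.exp (4*α)) ≤
        4 * (4*L + S)^2 * M * (y^4 * Real.exp (4*α)) := by
      apply mul_le_mul_of_nonneg_right hstep (by positivity)
    calc a^4 = e1^2 * a^4 * (y^4 * Real.exp (4*α)) := by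
          rw [show e1^2 * a^4 * (y^4 * Real.exp (4*α)) =
            a^4 * (e1^2 * (y^4 * Real.exp (4*α))) by ring, hkey, mul_one]
      _ ≤ 4 * (4*L + S)^2 * M * (y^4 * Real.exp (4*α)) := h5
      _ = K * y^4 := by rw [hK]; ring
  clear_value F M K C a r e1 y
  have hCy : a ≤ C * y := by
    apply le_of_pow_le_pow_left₀ (n := 4) (by norm_num) (by positivity)
    calc a^4 ≤ K * y^4 := ha4
      _ ≤ C^4 * y^4 := by
          apply mul_le_mul_of_nonneg_right _ (by positivity)
          calc K ≤ C := hCK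
            _ ≤ C^4 := le_self_pow₀ hC1 (by norm_num)
      _ = (C * y)^4 := (mul_pow C y 4).symm
  exact hCy

/-! ### Bootstrap of pointwise decay to derivatives -/

/-- Pointwise exponential decay on the closed half-plane. -/
def PtDecay (g : ℝ → ℝ → ℝ) : Prop :=
  ∃ α > (0:ℝ), ∃ C : ℝ, ∀ s t : ℝ, 0 ≤ t → |g s t| ≤ C * Real.exp (-α * phi s t)

lemma sqrt_exp' (x : ℝ) : Real.sqrt (Real.exp x) = Real.exp (x/2) := by
  rw [show Real.exp x = (Real.exp (x/2))^2 by
    rw [sq, ← Real.exp_add]; congr 1; ring]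
  exact Real.sqrt_sq (Real.exp_nonneg _)

lemma ptDecay_pd1 {g : ℝ → ℝ → ℝ} (hg : Smooth2 g)
    (hd : PtDecay g) (hB : ∃ B : ℝ, ∀ s t : ℝ, 0 ≤ t → |pd1 (pd1 g) s t| ≤ B) :
    PtDecay (pd1 g) := by
  obtain ⟨α, hα, C, hC⟩ := hd
  obtain ⟨B, hBb⟩ := hB
  set C1 : ℝ := max C 1 with hC1
  have hC10 : 0 < C1 := lt_of_lt_of_le one_pos (le_max_right _ _)
  set Amax : ℝ := C1 * Real.exp α with hAmax
  have hAmax0 : 0 < Amax := by positivity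
  refine ⟨α/2, by linarith, 3 * max (Real.sqrt (max B 1)) (Real.sqrt Amax) * Real.sqrt Amax, ?_⟩
  intro s₀ t₀ ht₀
  set A : ℝ := Amax * Real.exp (-α * phi s₀ t₀) with hA
  have hA0 : 0 < A := by positivity
  have hAm : A ≤ Amax := by
    rw [hA]
    nth_rewrite 2 [show Amax = Amax * 1 by ring]
    apply mul_le_mul_of_nonneg_left _ hAmax0.le
    rw [Real.exp_le_one_iff]
    have := phi_nonneg s₀ t₀ ht₀
    nlinarith
  have hfA : ∀ x ∈ Icc s₀ (s₀ + 1), |g x t₀| ≤ A := by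
    intro x hx
    have hphix : phi s₀ t₀ - 1 ≤ phi x t₀ := by
      have h1 := phi_lip (s := x) (t := t₀) (s' := s₀) (t' := t₀)
      have h2 := neg_abs_le (phi x t₀ - phi s₀ t₀)
      have h3 : |x - s₀| ≤ 1 := abs_le.2 ⟨by linarith [hx.1], by linarith [hx.2]⟩
      simp only [sub_self, abs_zero] at h1
      linarith
    have h4 : Real.exp (-α * phi x t₀) ≤ Real.exp α * Real.exp (-α * phi s₀ t₀) := by
      rw [← Real.exp_add, Real.exp_le_exp]
      nlinarith
    calc |g x t₀| ≤ C * Real.exp (-α * phi x t₀) := hC x t₀ ht₀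
      _ ≤ C1 * Real.exp (-α * phi x t₀) :=
          mul_le_mul_of_nonneg_right (le_max_left _ _) (Real.exp_nonneg _)
      _ ≤ C1 * (Real.exp α * Real.exp (-α * phi s₀ t₀)) :=
          mul_le_mul_of_nonneg_left h4 hC10.le
      _ = A := by rw [hA, hAmax]; ring
  have hfB : ∀ x ∈ Icc s₀ (s₀ + 1), |pd1 (pd1 g) x t₀| ≤ B := fun x _ => hBb x t₀ ht₀
  have hmain := landau_decay_1d (f := fun x => g x t₀) (f' := fun x => pd1 g x t₀)
    (f'' := fun x => pd1 (pd1 g) x t₀)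
    (fun x _ => hasDerivAt_pd1 hg x t₀)
    (fun x _ => hasDerivAt_pd1 (smooth2_pd1 hg) x t₀)
    hA0 hAm hfA hfB
  have hsA : Real.sqrt A = Real.sqrt Amax * Real.exp (-(α/2) * phi s₀ t₀) := by
    rw [hA, Real.sqrt_mul hAmax0.le, sqrt_exp']
    congr 1
    ring
  calc |pd1 g s₀ t₀| ≤ 3 * max (Real.sqrt (max B 1)) (Real.sqrt Amax) * Real.sqrt A := hmain
    _ = 3 * max (Real.sqrt (max B 1)) (Real.sqrt Amax) * Real.sqrt Amax *
        Real.exp (-(α/2) * phi s₀ t₀) := by rw [hsA]; ring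

lemma ptDecay_pd2 {g : ℝ → ℝ → ℝ} (hg : Smooth2 g)
    (hd : PtDecay g) (hB : ∃ B : ℝ, ∀ s t : ℝ, 0 ≤ t → |pd2 (pd2 g) s t| ≤ B) :
    PtDecay (pd2 g) := by
  obtain ⟨α, hα, C, hC⟩ := hd
  obtain ⟨B, hBb⟩ := hB
  set C1 : ℝ := max C 1 with hC1
  have hC10 : 0 < C1 := lt_of_lt_of_le one_pos (le_max_right _ _)
  set Amax : ℝ := C1 * Real.exp α with hAmax
  have hAmax0 : 0 < Amax := by positivity
  refine ⟨α/2, by linarith, 3 * max (Real.sqrt (max B 1)) (Real.sqrt Amax) * Real.sqrt Amax, ?_⟩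
  intro s₀ t₀ ht₀
  set A : ℝ := Amax * Real.exp (-α * phi s₀ t₀) with hA
  have hA0 : 0 < A := by positivity
  have hAm : A ≤ Amax := by
    rw [hA]
    nth_rewrite 2 [show Amax = Amax * 1 by ring]
    apply mul_le_mul_of_nonneg_left _ hAmax0.le
    rw [Real.exp_le_one_iff]
    have := phi_nonneg s₀ t₀ ht₀
    nlinarith
  have hfA : ∀ y ∈ Icc t₀ (t₀ + 1), |g s₀ y| ≤ A := by
    intro y hy
    have hy0 : 0 ≤ y := le_trans ht₀ hy.1
    have hphix : phi s₀ t₀ - 1 ≤ phi s₀ y := by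
      have h1 := phi_lip (s := s₀) (t := y) (s' := s₀) (t' := t₀)
      have h2 := neg_abs_le (phi s₀ y - phi s₀ t₀)
      have h3 : |y - t₀| ≤ 1 := abs_le.2 ⟨by linarith [hy.1], by linarith [hy.2]⟩
      simp only [sub_self, abs_zero] at h1
      linarith
    have h4 : Real.exp (-α * phi s₀ y) ≤ Real.exp α * Real.exp (-α * phi s₀ t₀) := by
      rw [← Real.exp_add, Real.exp_le_exp]
      nlinarith
    calc |g s₀ y| ≤ C * Real.exp (-α * phi s₀ y) := hC s₀ y hy0
      _ ≤ C1 * Real.exp (-α * phi s₀ y) :=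
          mul_le_mul_of_nonneg_right (le_max_left _ _) (Real.exp_nonneg _)
      _ ≤ C1 * (Real.exp α * Real.exp (-α * phi s₀ t₀)) :=
          mul_le_mul_of_nonneg_left h4 hC10.le
      _ = A := by rw [hA, hAmax]; ring
  have hfB : ∀ y ∈ Icc t₀ (t₀ + 1), |pd2 (pd2 g) s₀ y| ≤ B :=
    fun y hy => hBb s₀ y (le_trans ht₀ hy.1)
  have hmain := landau_decay_1d (f := fun y => g s₀ y) (f' := fun y => pd2 g s₀ y)
    (f'' := fun y => pd2 (pd2 g) s₀ y)
    (fun y _ => hasDerivAt_pd2 hg s₀ y)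
    (fun y _ => hasDerivAt_pd2 (smooth2_pd2 hg) s₀ y)
    hA0 hAm hfA hfB
  have hsA : Real.sqrt A = Real.sqrt Amax * Real.exp (-(α/2) * phi s₀ t₀) := by
    rw [hA, Real.sqrt_mul hAmax0.le, sqrt_exp']
    congr 1
    ring
  calc |pd2 g s₀ t₀| ≤ 3 * max (Real.sqrt (max B 1)) (Real.sqrt Amax) * Real.sqrt A := hmain
    _ = 3 * max (Real.sqrt (max B 1)) (Real.sqrt Amax) * Real.sqrt Amax *
        Real.exp (-(α/2) * phi s₀ t₀) := by rw [hsA]; ring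

/-! ### From pointwise decay to weighted `L²` -/

lemma exp_abs_le (α x : ℝ) (hα : 0 < α) :
    Real.exp (-α * |x|) ≤ max 1 (4/α^2) * (1 + x^2)⁻¹ := by
  set M : ℝ := max 1 (4/α^2) with hMdef
  have hM1 : (1:ℝ) ≤ M := le_max_left _ _
  have hM2 : 4/α^2 ≤ M := le_max_right _ _
  set m : ℝ := Real.exp (α * |x| / 2) with hm
  have h1 : α * |x| / 2 + 1 ≤ m := Real.add_one_le_exp _
  have h2 : Real.exp (α * |x|) = m^2 := by
    rw [hm, sq, ← Real.exp_add]; congr 1; ring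
  have h3 : 1 + α^2 * x^2 / 4 ≤ m^2 := by
    nlinarith [abs_nonneg x, sq_abs x, mul_nonneg hα.le (abs_nonneg x)]
  have h4 : 4/α^2 * α^2 = 4 := by field_simp
  have hfin : 1 * (1 + x^2) ≤ M * m^2 := by
    nlinarith [sq_nonneg x, mul_le_mul_of_nonneg_left h3 (le_trans one_pos.le hM1),
      mul_nonneg (sq_nonneg α) (sq_nonneg x)]
  have hmx : -α * |x| = -(α * |x|) := by ring
  rw [hmx, Real.exp_neg, h2, show (m^2)⁻¹ = 1/m^2 by ring,
    show M * (1+x^2)⁻¹ = M/(1+x^2) by ring, div_le_div_iff₀ (by positivity) (by positivity)]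
  exact hfin

lemma L2_of_ptDecay {g : ℝ → ℝ → ℝ} {α C : ℝ} (hα : 0 < α) (hC : 0 ≤ C)
    (hcont : Continuous (fun p : ℝ × ℝ => g p.1 p.2))
    (hpt : ∀ s t : ℝ, 0 ≤ t → |g s t| ≤ C * Real.exp (-α * phi s t)) :
    L2Half (expWeight (α/2) g) := by
  set M : ℝ := max 1 (4/α^2) with hMdef
  have hM1 : (1:ℝ) ≤ M := le_max_left _ _
  set f : ℝ → ℝ := fun x => (C^2 * M) * (1 + x^2)⁻¹ with hf
  set gg : ℝ → ℝ := fun y => Real.exp (-α * y) with hgg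
  have hfint : MeasureTheory.Integrable f volume := by
    exact (integrable_inv_one_add_sq).const_mul _
  have hggint : MeasureTheory.Integrable gg (volume.restrict (Set.Ioi (0:ℝ))) :=
    exp_neg_integrableOn_Ioi 0 hα
  have hprod : MeasureTheory.Integrable (fun p : ℝ × ℝ => f p.1 * gg p.2)
      (volume.prod (volume.restrict (Set.Ioi (0:ℝ)))) :=
    hfint.mul_prod hggint
  have hmeq : volume.prod (volume.restrict (Set.Ioi (0:ℝ)))
      = (volume : Measure (ℝ × ℝ)).restrict ((Set.univ : Set ℝ) ×ˢ Set.Ioi (0:ℝ)) := by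
    have h := MeasureTheory.Measure.prod_restrict (μ := (volume : Measure ℝ))
      (ν := (volume : Measure ℝ)) (Set.univ : Set ℝ) (Set.Ioi (0:ℝ))
    rw [MeasureTheory.Measure.restrict_univ] at h
    rw [h, ← MeasureTheory.Measure.volume_eq_prod]
  rw [hmeq] at hprod
  have hFc : Continuous (fun p : ℝ × ℝ => (expWeight (α/2) g p.1 p.2)^2) := by
    apply Continuous.pow
    apply Continuous.mul _ hcont
    apply Real.continuous_exp.comp
    exact continuous_const.mul (continuous_snd.add
      (Real.continuous_sqrt.comp ((continuous_fst.pow 2).add continuous_const)))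
  apply MeasureTheory.Integrable.mono' hprod hFc.aestronglyMeasurable
  rw [MeasureTheory.ae_restrict_iff' (MeasurableSet.univ.prod measurableSet_Ioi)]
  apply MeasureTheory.ae_of_all
  rintro ⟨s, t⟩ ⟨-, ht⟩
  have ht0 : 0 ≤ t := le_of_lt ht
  have hb := hpt s t ht0
  have hsq : (expWeight (α/2) g s t)^2
      = (Real.exp ((α/2) * phi s t) * |g s t|)^2 := by
    rw [expWeight]
    simp only [mul_pow, sq_abs]
    rfl
  have hchain : (Real.exp ((α/2) * phi s t) * |g s t|)^2
      ≤ C^2 * Real.exp (-α * phi s t) := by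
    have hstep1 : Real.exp ((α/2) * phi s t) * |g s t|
        ≤ Real.exp ((α/2) * phi s t) * (C * Real.exp (-α * phi s t)) :=
      mul_le_mul_of_nonneg_left hb (Real.exp_nonneg _)
    have hstep2 : (Real.exp ((α/2) * phi s t) * (C * Real.exp (-α * phi s t)))^2
        = C^2 * Real.exp (-α * phi s t) := by
      have e2 : Real.exp ((α/2) * phi s t + -α * phi s t) ^ 2 = Real.exp (-α * phi s t) := by
        rw [sq, ← Real.exp_add]; congr 1; ring
      rw [show Real.exp ((α/2) * phi s t) * (C * Real.exp (-α * phi s t))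
          = C * Real.exp ((α/2) * phi s t + -α * phi s t) by rw [Real.exp_add]; ring,
        mul_pow, e2]
    calc (Real.exp ((α/2) * phi s t) * |g s t|)^2
        ≤ (Real.exp ((α/2) * phi s t) * (C * Real.exp (-α * phi s t)))^2 := by
          apply pow_le_pow_left₀ (by positivity) hstep1
      _ = C^2 * Real.exp (-α * phi s t) := hstep2
  have hdom : C^2 * Real.exp (-α * phi s t) ≤ f s * gg t := by
    have hphi : Real.exp (-α * phi s t) = Real.exp (-α * Real.sqrt (s^2+1)) * Real.exp (-α * t) := by
      rw [← Real.exp_add]; congr 1; unfold phi; ring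
    have habs : Real.exp (-α * Real.sqrt (s^2+1)) ≤ Real.exp (-α * |s|) := by
      rw [Real.exp_le_exp]
      have h5 : |s| ≤ Real.sqrt (s^2+1) := by
        rw [show |s| = Real.sqrt (s^2) by rw [Real.sqrt_sq_eq_abs]]
        exact Real.sqrt_le_sqrt (by nlinarith)
      nlinarith
    have h6 := exp_abs_le α s hα
    calc C^2 * Real.exp (-α * phi s t)
        = C^2 * (Real.exp (-α * Real.sqrt (s^2+1)) * Real.exp (-α * t)) := by rw [hphi]
      _ ≤ C^2 * (Real.exp (-α * |s|) * Real.exp (-α * t)) := by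
          apply mul_le_mul_of_nonneg_left _ (by positivity)
          exact mul_le_mul_of_nonneg_right habs (Real.exp_nonneg _)
      _ ≤ C^2 * ((M * (1 + s^2)⁻¹) * Real.exp (-α * t)) := by
          apply mul_le_mul_of_nonneg_left _ (by positivity)
          exact mul_le_mul_of_nonneg_right h6 (Real.exp_nonneg _)
      _ = f s * gg t := by rw [hf, hgg]; ring
  calc ‖(expWeight (α/2) g s t)^2‖ = (expWeight (α/2) g s t)^2 := by
        rw [Real.norm_eq_abs, abs_of_nonneg (sq_nonneg _)]
    _ = (Real.exp ((α/2) * phi s t) * |g s t|)^2 := hsq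
    _ ≤ C^2 * Real.exp (-α * phi s t) := hchain
    _ ≤ f s * gg t := hdom

/-! ### Main theorem -/

/-- Proposition 2.2: the groundstate `u` belongs to `H^∞_exp`: every iterated partial
derivative `∂_s^ℓ ∂_t^k u` has exponential decay in `L²(ℝ²₊)`. -/
theorem groundstate_Hinfty_exp (θ : ℝ) (hθ : θ ∈ Set.Ioo 0 (π/2))
    (u : ℝ → ℝ → ℝ) (σ : ℝ) (hu : IsModelEigen θ u σ)
    (hdecay : ∃ α₀ > 0, H1Half (expWeight α₀ u))
    (hgap : ∃ δ > 0, ∀ w : ℝ → ℝ → ℝ,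
      (∀ n : ℕ, ContDiff ℝ n (fun p : ℝ × ℝ => w p.1 p.2)) → SchwartzHalf w →
      (∀ s : ℝ, pd2 w s 0 = 0) → intHalf (fun s t => w s t * u s t) = 0 →
      intHalf (fun s t => (pd1 w s t)^2 + (pd2 w s t)^2 + (Vpot θ s t)^2 * (w s t)^2) ≥
        (σ + δ) * intHalf (fun s t => (w s t)^2)) :
    ∀ l k : ℕ, ∃ α > 0, L2Half (expWeight α (pd1^[l] (pd2^[k] u))) := by
  intro l k
  obtain ⟨α₀, hα₀, hH1⟩ := hdecay
  -- uniform sup bounds on all iterated partial derivatives (on the closed half-plane)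
  have hsup : ∀ k' l' : ℕ, ∃ B : ℝ, ∀ s t : ℝ, 0 ≤ t → |pd1^[k'] (pd2^[l'] u) s t| ≤ B := by
    intro k' l'
    obtain ⟨Cb, hCb⟩ := hu.schwartz k' l' 0
    refine ⟨Cb, fun s t ht => ?_⟩
    have := hCb s t ht
    simpa using this
  -- joint smoothness of all iterated partial derivatives
  have hsm2 : ∀ l' : ℕ, Smooth2 (pd2^[l'] u) := by
    intro l'
    induction l' with
    | zero => exact hu.smooth
    | succ n ih =>
      rw [Function.iterate_succ_apply']
      exact smooth2_pd2 ih
  have hsm : ∀ k' l' : ℕ, Smooth2 (pd1^[k'] (pd2^[l'] u)) := by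
    intro k' l'
    induction k' with
    | zero => exact hsm2 l'
    | succ n ih =>
      rw [Function.iterate_succ_apply']
      exact smooth2_pd1 ih
  -- Lipschitz estimate for u on the closed half-plane
  obtain ⟨L1, hL1⟩ := hsup 1 0
  obtain ⟨L2', hL2⟩ := hsup 0 1
  have hL1' : ∀ s t : ℝ, 0 ≤ t → |pd1 u s t| ≤ L1 := by
    intro s t ht; have := hL1 s t ht; simpa using this
  have hL2' : ∀ s t : ℝ, 0 ≤ t → |pd2 u s t| ≤ L2' := by
    intro s t ht; have := hL2 s t ht; simpa using this
  have hL10 : 0 ≤ L1 := le_trans (abs_nonneg _) (hL1' 0 0 le_rfl)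
  have hL20 : 0 ≤ L2' := le_trans (abs_nonneg _) (hL2' 0 0 le_rfl)
  set L : ℝ := max L1 L2' + 1 with hLdef
  have hL0 : 0 < L := by
    have := le_max_left L1 L2'
    simp only [hLdef]
    nlinarith
  have hlip : ∀ s t s' t' : ℝ, 0 ≤ t → 0 ≤ t' →
      |u s t - u s' t'| ≤ L * (|s - s'| + |t - t'|) := by
    intro s t s' t' ht ht'
    -- vertical move at fixed s (both heights nonneg), then horizontal move at height t'
    have hv : |u s t - u s t'| ≤ L2' * |t - t'| := by
      have := Convex.norm_image_sub_le_of_norm_hasDerivWithin_le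
        (f := fun y => u s y) (f' := fun y => pd2 u s y) (C := L2')
        (fun y hy => (hasDerivAt_pd2 hu.smooth s y).hasDerivWithinAt)
        (fun y hy => by simpa [Real.norm_eq_abs] using hL2' s y hy)
        (convex_Ici (0:ℝ)) (Set.mem_Ici.2 ht') (Set.mem_Ici.2 ht)
      simpa [Real.norm_eq_abs] using this
    have hh : |u s t' - u s' t'| ≤ L1 * |s - s'| := by
      have := Convex.norm_image_sub_le_of_norm_hasDerivWithin_le
        (f := fun x => u x t') (f' := fun x => pd1 u x t') (C := L1)
        (fun x _ => (hasDerivAt_pd1 hu.smooth x t').hasDerivWithinAt)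
        (fun x _ => by simpa [Real.norm_eq_abs] using hL1' x t' ht')
        convex_univ (Set.mem_univ s') (Set.mem_univ s)
      simpa [Real.norm_eq_abs] using this
    have htri : |u s t - u s' t'| ≤ |u s t - u s t'| + |u s t' - u s' t'| := by
      have : u s t - u s' t' = (u s t - u s t') + (u s t' - u s' t') := by ring
      rw [this]; exact abs_add_le _ _
    have hmax1 : L1 ≤ max L1 L2' := le_max_left _ _
    have hmax2 : L2' ≤ max L1 L2' := le_max_right _ _
    have habs1 : (0:ℝ) ≤ |s - s'| := abs_nonneg _
    have habs2 : (0:ℝ) ≤ |t - t'| := abs_nonneg _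
    have h1 : L1 * |s - s'| ≤ L * |s - s'| := by
      apply mul_le_mul_of_nonneg_right _ habs1
      simp only [hLdef]; nlinarith
    have h2 : L2' * |t - t'| ≤ L * |t - t'| := by
      apply mul_le_mul_of_nonneg_right _ habs2
      simp only [hLdef]; nlinarith
    calc |u s t - u s' t'| ≤ |u s t - u s t'| + |u s t' - u s' t'| := htri
      _ ≤ L2' * |t - t'| + L1 * |s - s'| := by linarith
      _ ≤ L * |t - t'| + L * |s - s'| := by linarith
      _ = L * (|s - s'| + |t - t'|) := by ring
  -- sup bound for u itself
  obtain ⟨S0, hS0⟩ := hsup 0 0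
  have hS0' : ∀ s t : ℝ, 0 ≤ t → |u s t| ≤ S0 := by
    intro s t ht; have := hS0 s t ht; simpa using this
  set S : ℝ := max S0 1 with hSdef
  have hSx : 0 < S := lt_of_lt_of_le one_pos (le_max_right _ _)
  have hSsup : ∀ s t : ℝ, 0 ≤ t → |u s t| ≤ S :=
    fun s t ht => le_trans (hS0' s t ht) (le_max_left _ _)
  -- weighted L² integrability of u
  have hint : MeasureTheory.IntegrableOn
      (fun p : ℝ × ℝ => (Real.exp (α₀ * phi p.1 p.2) * u p.1 p.2)^2)
      ((Set.univ : Set ℝ) ×ˢ Set.Ioi (0:ℝ)) volume := hH1.1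
  -- pointwise exponential decay of u
  obtain ⟨C0, hC0⟩ := pointwise_decay_of_L2 hα₀ hL0 hSx hlip hSsup hint
  have hbase : PtDecay u := ⟨α₀/2, by linarith, C0, hC0⟩
  -- bootstrap in the t-direction
  have hPk : ∀ k' : ℕ, PtDecay (pd2^[k'] u) := by
    intro k'
    induction k' with
    | zero => simpa using hbase
    | succ n ih =>
      rw [Function.iterate_succ_apply']
      apply ptDecay_pd2 (hsm2 n) ih
      obtain ⟨B, hB⟩ := hsup 0 (n+2)
      refine ⟨B, fun s t ht => ?_⟩
      have := hB s t ht
      simpa [Function.iterate_succ_apply'] using this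
  -- bootstrap in the s-direction
  have hPlk : PtDecay (pd1^[l] (pd2^[k] u)) := by
    induction l with
    | zero => simpa using hPk k
    | succ n ih =>
      rw [Function.iterate_succ_apply']
      apply ptDecay_pd1 (hsm n k) ih
      obtain ⟨B, hB⟩ := hsup (n+2) k
      refine ⟨B, fun s t ht => ?_⟩
      have := hB s t ht
      simpa [Function.iterate_succ_apply'] using this
  -- conclude
  obtain ⟨α, hαpos, C, hCpt⟩ := hPlk
  have hCnn : 0 ≤ C := by
    have h0 := hCpt 0 0 le_rfl
    have he := Real.exp_pos (-α * phi 0 0)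
    nlinarith [abs_nonneg (pd1^[l] (pd2^[k] u) 0 0)]
  have hcont : Continuous (fun p : ℝ × ℝ => (pd1^[l] (pd2^[k] u)) p.1 p.2) := by
    have := (hsm l k) 0
    exact this.continuous
  exact ⟨α/2, by positivity, L2_of_ptDecay hαpos hCnn hcont hCpt⟩
end
end

section
/- Let θ ∈ (0, π/2) and let u be a model eigenfunction of H(θ) with eigenvalue σ. Let λ ∈ ℝ, let g : ℝ²₊ → ℝ be smooth up to the boundary and Schwartz-class, and let v be smooth up to the boundary, Schwartz-class, with ∂_t v(s,0) = 0 for all s, solving (H(θ) − σ) v = λ u − g on ℝ²₊. Then 2 sin θ · ∫_{ℝ²₊} V_θ v u ds dt = ∫_{ℝ²₊} ∂_s g · u ds dt. -/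
open Real MeasureTheory Set

noncomputable section

namespace Vu1Aux

open Filter Topology

/-- Smoothness of all finite orders, jointly in both variables. -/
def Sm (f : ℝ → ℝ → ℝ) : Prop := ∀ n : ℕ, ContDiff ℝ n (fun p : ℝ × ℝ => f p.1 p.2)

/-- Rapid decay on the closed half plane. -/
def Dec (f : ℝ → ℝ → ℝ) : Prop :=
  ∀ r : ℝ, ∃ C : ℝ, 0 ≤ C ∧ ∀ s t : ℝ, 0 ≤ t → |f s t| ≤ C * (1 + |s| + t) ^ (-r)

lemma one_add_pos {s t : ℝ} (ht : 0 ≤ t) : 0 < 1 + |s| + t := by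
  have := abs_nonneg s; linarith

lemma one_add_one_le {s t : ℝ} (ht : 0 ≤ t) : 1 ≤ 1 + |s| + t := by
  have := abs_nonneg s; linarith

lemma schwartzHalf_dec {f : ℝ → ℝ → ℝ} (h : SchwartzHalf f) (k l : ℕ) :
    Dec (pd1^[k] (pd2^[l] f)) := by
  intro r
  obtain ⟨C, hC⟩ := h k l ⌈r⌉₊
  refine ⟨max C 0, le_max_right _ _, fun s t ht => ?_⟩
  have hx := one_add_pos (s := s) ht
  have h1 : (1 + |s| + t) ^ (-(⌈r⌉₊ : ℝ)) ≤ (1 + |s| + t) ^ (-r) :=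
    Real.rpow_le_rpow_of_exponent_le (one_add_one_le ht) (neg_le_neg (Nat.le_ceil r))
  calc |pd1^[k] (pd2^[l] f) s t| ≤ C * (1 + |s| + t) ^ (-(⌈r⌉₊ : ℝ)) := hC s t ht
    _ ≤ max C 0 * (1 + |s| + t) ^ (-(⌈r⌉₊ : ℝ)) :=
        mul_le_mul_of_nonneg_right (le_max_left _ _) (Real.rpow_nonneg hx.le _)
    _ ≤ max C 0 * (1 + |s| + t) ^ (-r) :=
        mul_le_mul_of_nonneg_left h1 (le_max_right _ _)

lemma Dec.mul {f g : ℝ → ℝ → ℝ} (hf : Dec f) (hg : Dec g) :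
    Dec (fun s t => f s t * g s t) := by
  intro r
  obtain ⟨C, hC0, hC⟩ := hf r
  obtain ⟨D, hD0, hD⟩ := hg 0
  refine ⟨C * D, by positivity, fun s t ht => ?_⟩
  have hx := one_add_pos (s := s) ht
  have hg1 : |g s t| ≤ D := by simpa using hD s t ht
  calc |f s t * g s t| = |f s t| * |g s t| := abs_mul _ _
    _ ≤ (C * (1 + |s| + t) ^ (-r)) * D :=
        mul_le_mul (hC s t ht) hg1 (abs_nonneg _) (by positivity)
    _ = C * D * (1 + |s| + t) ^ (-r) := by ring

lemma Dec.add {f g : ℝ → ℝ → ℝ} (hf : Dec f) (hg : Dec g) :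
    Dec (fun s t => f s t + g s t) := by
  intro r
  obtain ⟨C, hC0, hC⟩ := hf r
  obtain ⟨D, hD0, hD⟩ := hg r
  refine ⟨C + D, by positivity, fun s t ht => ?_⟩
  calc |f s t + g s t| ≤ |f s t| + |g s t| := abs_add_le _ _
    _ ≤ C * (1 + |s| + t) ^ (-r) + D * (1 + |s| + t) ^ (-r) :=
        add_le_add (hC s t ht) (hD s t ht)
    _ = (C + D) * (1 + |s| + t) ^ (-r) := by ring

lemma Dec.sub {f g : ℝ → ℝ → ℝ} (hf : Dec f) (hg : Dec g) :
    Dec (fun s t => f s t - g s t) := by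
  intro r
  obtain ⟨C, hC0, hC⟩ := hf r
  obtain ⟨D, hD0, hD⟩ := hg r
  refine ⟨C + D, by positivity, fun s t ht => ?_⟩
  calc |f s t - g s t| ≤ |f s t| + |g s t| := abs_sub _ _
    _ ≤ C * (1 + |s| + t) ^ (-r) + D * (1 + |s| + t) ^ (-r) :=
        add_le_add (hC s t ht) (hD s t ht)
    _ = (C + D) * (1 + |s| + t) ^ (-r) := by ring

lemma Dec.congr {f g : ℝ → ℝ → ℝ} (hf : Dec f) (h : ∀ s t : ℝ, g s t = f s t) : Dec g := by
  intro r
  obtain ⟨C, hC0, hC⟩ := hf r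
  exact ⟨C, hC0, fun s t ht => by rw [h s t]; exact hC s t ht⟩

lemma Dec.vmul {f : ℝ → ℝ → ℝ} (θ : ℝ) (hf : Dec f) :
    Dec (fun s t => Vpot θ s t * f s t) := by
  intro r
  obtain ⟨C, hC0, hC⟩ := hf (r + 1)
  refine ⟨C, hC0, fun s t ht => ?_⟩
  have hx := one_add_pos (s := s) ht
  have hV : |Vpot θ s t| ≤ 1 + |s| + t := by
    have h1 : |t * Real.cos θ| ≤ t := by
      rw [abs_mul, abs_of_nonneg ht]
      have hc : |Real.cos θ| ≤ 1 := abs_le.mpr ⟨Real.neg_one_le_cos θ, Real.cos_le_one θ⟩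
      nlinarith
    have h2 : |s * Real.sin θ| ≤ |s| := by
      rw [abs_mul]
      have hc : |Real.sin θ| ≤ 1 := abs_le.mpr ⟨Real.neg_one_le_sin θ, Real.sin_le_one θ⟩
      nlinarith [abs_nonneg s]
    calc |Vpot θ s t| = |t * Real.cos θ - s * Real.sin θ| := by rw [Vpot]
      _ ≤ |t * Real.cos θ| + |s * Real.sin θ| := abs_sub _ _
      _ ≤ 1 + |s| + t := by linarith
  have key : (1 + |s| + t) * (1 + |s| + t) ^ (-(r + 1)) = (1 + |s| + t) ^ (-r) := by
    rw [mul_comm, ← Real.rpow_add_one hx.ne']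
    congr 1
    ring
  calc |Vpot θ s t * f s t| = |Vpot θ s t| * |f s t| := abs_mul _ _
    _ ≤ (1 + |s| + t) * (C * (1 + |s| + t) ^ (-(r + 1))) :=
        mul_le_mul hV (hC s t ht) (abs_nonneg _) hx.le
    _ = C * ((1 + |s| + t) * (1 + |s| + t) ^ (-(r + 1))) := by ring
    _ = C * (1 + |s| + t) ^ (-r) := by rw [key]

lemma Sm.cont2 {f : ℝ → ℝ → ℝ} (hf : Sm f) : Continuous (fun p : ℝ × ℝ => f p.1 p.2) :=
  (hf 0).continuous

lemma Sm.diffAt {f : ℝ → ℝ → ℝ} (hf : Sm f) (p : ℝ × ℝ) :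
    DifferentiableAt ℝ (fun q : ℝ × ℝ => f q.1 q.2) p :=
  ((hf 1).differentiable (by simp)) p

lemma hasDerivAt1 {f : ℝ → ℝ → ℝ} (hf : Sm f) (s t : ℝ) :
    HasDerivAt (fun x => f x t) (pd1 f s t) s := by
  have h : DifferentiableAt ℝ (fun x => f x t) s := by
    have h1 := hf.diffAt (s, t)
    have h2 : DifferentiableAt ℝ (fun x : ℝ => ((x, t) : ℝ × ℝ)) s :=
      differentiableAt_id.prodMk (differentiableAt_const t)
    exact h1.comp s h2
  exact h.hasDerivAt

lemma hasDerivAt2 {f : ℝ → ℝ → ℝ} (hf : Sm f) (s t : ℝ) :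
    HasDerivAt (fun y => f s y) (pd2 f s t) t := by
  have h : DifferentiableAt ℝ (fun y => f s y) t := by
    have h1 := hf.diffAt (s, t)
    have h2 : DifferentiableAt ℝ (fun y : ℝ => ((s, y) : ℝ × ℝ)) t :=
      (differentiableAt_const s).prodMk differentiableAt_id
    exact h1.comp t h2
  exact h.hasDerivAt

lemma pd1_eq {f : ℝ → ℝ → ℝ} (hf : Sm f) (s t : ℝ) :
    pd1 f s t = fderiv ℝ (fun q : ℝ × ℝ => f q.1 q.2) (s, t) (1, 0) := by
  have hF := (hf.diffAt (s, t)).hasFDerivAt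
  have hι : HasDerivAt (fun x : ℝ => ((x, t) : ℝ × ℝ)) ((1 : ℝ), (0 : ℝ)) s :=
    (hasDerivAt_id s).prodMk (hasDerivAt_const s t)
  have h2 : HasDerivAt (fun x => f x t)
      (fderiv ℝ (fun q : ℝ × ℝ => f q.1 q.2) (s, t) (1, 0)) s := by have h := hF.comp_hasDerivAt s hι; exact h
  exact h2.deriv

lemma pd2_eq {f : ℝ → ℝ → ℝ} (hf : Sm f) (s t : ℝ) :
    pd2 f s t = fderiv ℝ (fun q : ℝ × ℝ => f q.1 q.2) (s, t) (0, 1) := by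
  have hF := (hf.diffAt (s, t)).hasFDerivAt
  have hι : HasDerivAt (fun y : ℝ => ((s, y) : ℝ × ℝ)) ((0 : ℝ), (1 : ℝ)) t :=
    (hasDerivAt_const t s).prodMk (hasDerivAt_id t)
  have h2 : HasDerivAt (fun y => f s y)
      (fderiv ℝ (fun q : ℝ × ℝ => f q.1 q.2) (s, t) (0, 1)) t := hF.comp_hasDerivAt t hι
  exact h2.deriv

lemma Sm.pd1 {f : ℝ → ℝ → ℝ} (hf : Sm f) : Sm (_root_.pd1 f) := by
  intro n
  have he : (fun p : ℝ × ℝ => _root_.pd1 f p.1 p.2)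
      = fun p : ℝ × ℝ => fderiv ℝ (fun q : ℝ × ℝ => f q.1 q.2) p (1, 0) := by
    funext p
    simpa using pd1_eq hf p.1 p.2
  rw [he]
  have h1 : ContDiff ℝ n (fderiv ℝ (fun q : ℝ × ℝ => f q.1 q.2)) :=
    (hf (n + 1)).fderiv_right (by exact_mod_cast le_rfl)
  exact h1.clm_apply contDiff_const

lemma Sm.pd2 {f : ℝ → ℝ → ℝ} (hf : Sm f) : Sm (_root_.pd2 f) := by
  intro n
  have he : (fun p : ℝ × ℝ => _root_.pd2 f p.1 p.2)
      = fun p : ℝ × ℝ => fderiv ℝ (fun q : ℝ × ℝ => f q.1 q.2) p (0, 1) := by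
    funext p
    simpa using pd2_eq hf p.1 p.2
  rw [he]
  have h1 : ContDiff ℝ n (fderiv ℝ (fun q : ℝ × ℝ => f q.1 q.2)) :=
    (hf (n + 1)).fderiv_right (by exact_mod_cast le_rfl)
  exact h1.clm_apply contDiff_const

lemma pd12_comm {f : ℝ → ℝ → ℝ} (hf : Sm f) : pd1 (pd2 f) = pd2 (pd1 f) := by
  funext s t
  have hdF : ∀ y, HasFDerivAt (fun q : ℝ × ℝ => f q.1 q.2)
      (fderiv ℝ (fun q : ℝ × ℝ => f q.1 q.2) y) y := fun y => (hf.diffAt y).hasFDerivAt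
  have hC2 : ContDiff ℝ 1 (fderiv ℝ (fun q : ℝ × ℝ => f q.1 q.2)) :=
    (hf 2).fderiv_right (by exact_mod_cast (by norm_num : (1:ℕ) + 1 ≤ 2))
  have hd2 : DifferentiableAt ℝ (fderiv ℝ (fun q : ℝ × ℝ => f q.1 q.2)) (s, t) :=
    (hC2.differentiable (by simp)) (s, t)
  have hsymm := second_derivative_symmetric hdF hd2.hasFDerivAt
    ((1 : ℝ), (0 : ℝ)) ((0 : ℝ), (1 : ℝ))
  have h1 : pd1 (pd2 f) s t
      = fderiv ℝ (fderiv ℝ (fun q : ℝ × ℝ => f q.1 q.2)) (s, t) (1, 0) (0, 1) := by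
    have e1 := pd1_eq hf.pd2 s t
    have e2 : (fun q : ℝ × ℝ => pd2 f q.1 q.2)
        = fun q : ℝ × ℝ => fderiv ℝ (fun q : ℝ × ℝ => f q.1 q.2) q (0, 1) := by
      funext q; simpa using pd2_eq hf q.1 q.2
    rw [e1, e2, fderiv_clm_apply hd2 (differentiableAt_const _)]
    simp
  have h2 : pd2 (pd1 f) s t
      = fderiv ℝ (fderiv ℝ (fun q : ℝ × ℝ => f q.1 q.2)) (s, t) (0, 1) (1, 0) := by
    have e1 := pd2_eq hf.pd1 s t
    have e2 : (fun q : ℝ × ℝ => pd1 f q.1 q.2)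
        = fun q : ℝ × ℝ => fderiv ℝ (fun q : ℝ × ℝ => f q.1 q.2) q (1, 0) := by
      funext q; simpa using pd1_eq hf q.1 q.2
    rw [e1, e2, fderiv_clm_apply hd2 (differentiableAt_const _)]
    simp
  rw [h1, h2, hsymm]

lemma hasDerivAt_V (θ t s : ℝ) : HasDerivAt (fun x => Vpot θ x t) (-Real.sin θ) s := by
  have h : HasDerivAt (fun x : ℝ => t * Real.cos θ - x * Real.sin θ)
      (0 - 1 * Real.sin θ) s :=
    (hasDerivAt_const s (t * Real.cos θ)).sub ((hasDerivAt_id s).mul_const (Real.sin θ))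
  simpa [Vpot] using h

/-- The measure on the half plane. -/
def μH : Measure (ℝ × ℝ) := (volume : Measure ℝ).prod (volume.restrict (Set.Ioi 0))

lemma ae_snd_pos : ∀ᵐ p : ℝ × ℝ ∂μH, 0 < p.2 := by
  rw [ae_iff]
  have hs : {p : ℝ × ℝ | ¬ 0 < p.2} = (Set.univ : Set ℝ) ×ˢ Set.Iic (0 : ℝ) := by
    ext p; simp [not_lt]
  rw [μH, hs, Measure.prod_prod, Measure.restrict_apply measurableSet_Iic,
    Set.Iic_inter_Ioi, Set.Ioc_self]
  simp

lemma integrable_of_Dec {f : ℝ → ℝ → ℝ} (hf : Dec f)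
    (hc : Continuous (fun p : ℝ × ℝ => f p.1 p.2)) :
    Integrable (fun p : ℝ × ℝ => f p.1 p.2) μH := by
  obtain ⟨C, hC0, hC⟩ := hf 3
  have hbase : Integrable (fun p : ℝ × ℝ => C * (1 + ‖p‖) ^ (-(3 : ℝ))) μH := by
    have h1 : Integrable (fun p : ℝ × ℝ => (1 + ‖p‖) ^ (-(3 : ℝ)))
        (volume : Measure (ℝ × ℝ)) := by
      apply integrable_one_add_norm
      rw [Module.finrank_prod, Module.finrank_self]
      norm_num
    have h2 : μH = ((volume : Measure ℝ).prod (volume : Measure ℝ)).restrict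
        ((Set.univ : Set ℝ) ×ˢ Set.Ioi (0 : ℝ)) := by
      rw [μH, ← Measure.prod_restrict, Measure.restrict_univ]
    rw [h2, ← Measure.volume_eq_prod]
    exact (h1.const_mul C).integrableOn
  apply hbase.mono' hc.aestronglyMeasurable
  filter_upwards [ae_snd_pos] with p hp
  have ht : (0 : ℝ) ≤ p.2 := hp.le
  have hb := hC p.1 p.2 ht
  have hnorm : ‖p‖ ≤ |p.1| + p.2 := by
    rw [Prod.norm_def]
    apply max_le
    · rw [Real.norm_eq_abs]; linarith
    · rw [Real.norm_eq_abs, abs_of_nonneg ht]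
      have := abs_nonneg p.1; linarith
  have hmono : (1 + |p.1| + p.2) ^ (-(3 : ℝ)) ≤ (1 + ‖p‖) ^ (-(3 : ℝ)) := by
    apply Real.rpow_le_rpow_of_nonpos (by positivity) (by linarith) (by norm_num)
  calc ‖f p.1 p.2‖ = |f p.1 p.2| := Real.norm_eq_abs _
    _ ≤ C * (1 + |p.1| + p.2) ^ (-(3 : ℝ)) := hb
    _ ≤ C * (1 + ‖p‖) ^ (-(3 : ℝ)) := mul_le_mul_of_nonneg_left hmono hC0

lemma intS {f : ℝ → ℝ → ℝ} (hf : Dec f)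
    (hc : Continuous (fun p : ℝ × ℝ => f p.1 p.2)) {t : ℝ} (ht : 0 ≤ t) :
    Integrable (fun s => f s t) := by
  obtain ⟨C, hC0, hC⟩ := hf 2
  have h1 : Integrable (fun s : ℝ => C * (1 + ‖s‖) ^ (-(2 : ℝ))) := by
    apply Integrable.const_mul
    apply integrable_one_add_norm
    rw [Module.finrank_self]; norm_num
  apply h1.mono' ((hc.comp (continuous_id.prodMk continuous_const)).aestronglyMeasurable)
  refine Filter.Eventually.of_forall fun s => ?_
  have hb := hC s t ht
  have hmono : (1 + |s| + t) ^ (-(2 : ℝ)) ≤ (1 + |s|) ^ (-(2 : ℝ)) := by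
    apply Real.rpow_le_rpow_of_nonpos (by positivity) (by linarith) (by norm_num)
  calc ‖f s t‖ = |f s t| := Real.norm_eq_abs _
    _ ≤ C * (1 + |s| + t) ^ (-(2 : ℝ)) := hb
    _ ≤ C * (1 + |s|) ^ (-(2 : ℝ)) := mul_le_mul_of_nonneg_left hmono hC0
    _ = C * (1 + ‖s‖) ^ (-(2 : ℝ)) := by rw [Real.norm_eq_abs]

lemma intT {f : ℝ → ℝ → ℝ} (hf : Dec f)
    (hc : Continuous (fun p : ℝ × ℝ => f p.1 p.2)) (s : ℝ) :
    IntegrableOn (fun t => f s t) (Set.Ioi 0) := by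
  obtain ⟨C, hC0, hC⟩ := hf 2
  have h1 : Integrable (fun t : ℝ => C * (1 + ‖t‖) ^ (-(2 : ℝ))) := by
    apply Integrable.const_mul
    apply integrable_one_add_norm
    rw [Module.finrank_self]; norm_num
  apply h1.integrableOn.mono'
    ((hc.comp (continuous_const.prodMk continuous_id)).aestronglyMeasurable)
  rw [ae_restrict_iff' measurableSet_Ioi]
  refine Filter.Eventually.of_forall fun t htpos => ?_
  have ht : (0 : ℝ) ≤ t := le_of_lt htpos
  have hb := hC s t ht
  have hmono : (1 + |s| + t) ^ (-(2 : ℝ)) ≤ (1 + t) ^ (-(2 : ℝ)) := by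
    apply Real.rpow_le_rpow_of_nonpos (by positivity) ?_ (by norm_num)
    have := abs_nonneg s; linarith
  calc ‖f s t‖ = |f s t| := Real.norm_eq_abs _
    _ ≤ C * (1 + |s| + t) ^ (-(2 : ℝ)) := hb
    _ ≤ C * (1 + t) ^ (-(2 : ℝ)) := mul_le_mul_of_nonneg_left hmono hC0
    _ = C * (1 + ‖t‖) ^ (-(2 : ℝ)) := by rw [Real.norm_eq_abs, abs_of_nonneg ht]

lemma tendsto_S_top {f : ℝ → ℝ → ℝ} (hf : Dec f) {t : ℝ} (ht : 0 ≤ t) :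
    Tendsto (fun s => f s t) atTop (𝓝 0) := by
  obtain ⟨C, hC0, hC⟩ := hf 1
  have haux : Tendsto (fun s : ℝ => 1 + |s| + t) atTop atTop :=
    tendsto_atTop_add_const_right _ t
      (tendsto_atTop_add_const_left _ 1 tendsto_abs_atTop_atTop)
  have hg : Tendsto (fun s : ℝ => C * (1 + |s| + t) ^ (-(1 : ℝ))) atTop (𝓝 0) := by
    have h2 := (tendsto_rpow_neg_atTop (by norm_num : (0:ℝ) < 1)).comp haux
    have h3 := h2.const_mul C
    simpa using h3
  apply squeeze_zero_norm _ hg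
  intro s
  simpa [Real.norm_eq_abs] using hC s t ht

lemma tendsto_S_bot {f : ℝ → ℝ → ℝ} (hf : Dec f) {t : ℝ} (ht : 0 ≤ t) :
    Tendsto (fun s => f s t) atBot (𝓝 0) := by
  obtain ⟨C, hC0, hC⟩ := hf 1
  have haux : Tendsto (fun s : ℝ => 1 + |s| + t) atBot atTop :=
    tendsto_atTop_add_const_right _ t
      (tendsto_atTop_add_const_left _ 1 tendsto_abs_atBot_atTop)
  have hg : Tendsto (fun s : ℝ => C * (1 + |s| + t) ^ (-(1 : ℝ))) atBot (𝓝 0) := by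
    have h2 := (tendsto_rpow_neg_atTop (by norm_num : (0:ℝ) < 1)).comp haux
    have h3 := h2.const_mul C
    simpa using h3
  apply squeeze_zero_norm _ hg
  intro s
  simpa [Real.norm_eq_abs] using hC s t ht

lemma tendsto_T_top {f : ℝ → ℝ → ℝ} (hf : Dec f) (s : ℝ) :
    Tendsto (fun t => f s t) atTop (𝓝 0) := by
  obtain ⟨C, hC0, hC⟩ := hf 1
  have haux : Tendsto (fun t : ℝ => 1 + |s| + t) atTop atTop :=
    tendsto_atTop_add_const_left _ (1 + |s|) tendsto_id
  have hg : Tendsto (fun t : ℝ => C * (1 + |s| + t) ^ (-(1 : ℝ))) atTop (𝓝 0) := by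
    have h2 := (tendsto_rpow_neg_atTop (by norm_num : (0:ℝ) < 1)).comp haux
    have h3 := h2.const_mul C
    simpa using h3
  apply squeeze_zero_norm' ?_ hg
  filter_upwards [eventually_ge_atTop (0:ℝ)] with t ht
  simpa [Real.norm_eq_abs] using hC s t ht

lemma lineS {a b : ℝ → ℝ → ℝ} (hsa : Sm a) (hsb : Sm b)
    (hda : Dec a) (hdb : Dec b) (hda1 : Dec (pd1 a)) (hdb1 : Dec (pd1 b))
    {t : ℝ} (ht : 0 ≤ t) :
    (∫ s : ℝ, (pd1 a s t * b s t + a s t * pd1 b s t)) = 0 := by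
  have hderiv : ∀ x : ℝ, HasDerivAt (fun s => a s t * b s t)
      (pd1 a x t * b x t + a x t * pd1 b x t) x :=
    fun x => (hasDerivAt1 hsa x t).mul (hasDerivAt1 hsb x t)
  have hc1 : Continuous (fun p : ℝ × ℝ => pd1 a p.1 p.2 * b p.1 p.2) :=
    (Sm.cont2 hsa.pd1).mul (Sm.cont2 hsb)
  have hc2 : Continuous (fun p : ℝ × ℝ => a p.1 p.2 * pd1 b p.1 p.2) :=
    (Sm.cont2 hsa).mul (Sm.cont2 hsb.pd1)
  have hint : Integrable (fun s => pd1 a s t * b s t + a s t * pd1 b s t) :=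
    (intS (hda1.mul hdb) hc1 ht).add (intS (hda.mul hdb1) hc2 ht)
  have hbot : Tendsto (fun s => a s t * b s t) atBot (𝓝 0) := tendsto_S_bot (hda.mul hdb) ht
  have htop : Tendsto (fun s => a s t * b s t) atTop (𝓝 0) := tendsto_S_top (hda.mul hdb) ht
  have h := integral_of_hasDerivAt_of_tendsto hderiv hint hbot htop
  simpa using h

lemma lineT {a b : ℝ → ℝ → ℝ} (hsa : Sm a) (hsb : Sm b)
    (hda : Dec a) (hdb : Dec b) (hda2 : Dec (pd2 a)) (hdb2 : Dec (pd2 b)) (s : ℝ) :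
    (∫ t in Set.Ioi (0:ℝ), (pd2 a s t * b s t + a s t * pd2 b s t)) = -(a s 0 * b s 0) := by
  have hderiv : ∀ x ∈ Set.Ici (0:ℝ), HasDerivAt (fun t => a s t * b s t)
      (pd2 a s x * b s x + a s x * pd2 b s x) x :=
    fun x _ => (hasDerivAt2 hsa s x).mul (hasDerivAt2 hsb s x)
  have hc1 : Continuous (fun p : ℝ × ℝ => pd2 a p.1 p.2 * b p.1 p.2) :=
    (Sm.cont2 hsa.pd2).mul (Sm.cont2 hsb)
  have hc2 : Continuous (fun p : ℝ × ℝ => a p.1 p.2 * pd2 b p.1 p.2) :=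
    (Sm.cont2 hsa).mul (Sm.cont2 hsb.pd2)
  have hint : IntegrableOn (fun t => pd2 a s t * b s t + a s t * pd2 b s t) (Set.Ioi 0) :=
    (intT (hda2.mul hdb) hc1 s).add (intT (hda.mul hdb2) hc2 s)
  have htop : Tendsto (fun t => a s t * b s t) atTop (𝓝 0) := tendsto_T_top (hda.mul hdb) s
  have h := integral_Ioi_of_hasDerivAt_of_tendsto' hderiv hint htop
  simpa using h

lemma intHalf_eq {f : ℝ → ℝ → ℝ} (hf : Integrable (fun p : ℝ × ℝ => f p.1 p.2) μH) :
    intHalf f = ∫ p, f p.1 p.2 ∂μH :=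
  (MeasureTheory.integral_prod _ hf).symm

lemma intHalf_add {f g : ℝ → ℝ → ℝ} (hf : Integrable (fun p : ℝ × ℝ => f p.1 p.2) μH)
    (hg : Integrable (fun p : ℝ × ℝ => g p.1 p.2) μH) :
    intHalf (fun s t => f s t + g s t) = intHalf f + intHalf g := by
  rw [intHalf_eq (f := fun s t => f s t + g s t) (hf.add hg), intHalf_eq hf, intHalf_eq hg]
  exact integral_add hf hg

lemma intHalf_sub {f g : ℝ → ℝ → ℝ} (hf : Integrable (fun p : ℝ × ℝ => f p.1 p.2) μH)
    (hg : Integrable (fun p : ℝ × ℝ => g p.1 p.2) μH) :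
    intHalf (fun s t => f s t - g s t) = intHalf f - intHalf g := by
  rw [intHalf_eq (f := fun s t => f s t - g s t) (hf.sub hg), intHalf_eq hf, intHalf_eq hg]
  exact integral_sub hf hg

lemma intHalf_const_mul (c : ℝ) (f : ℝ → ℝ → ℝ) :
    intHalf (fun s t => c * f s t) = c * intHalf f := by
  show (∫ s : ℝ, ∫ t in Set.Ioi (0:ℝ), c * f s t)
      = c * ∫ s : ℝ, ∫ t in Set.Ioi (0:ℝ), f s t
  have h1 : (fun s : ℝ => ∫ t in Set.Ioi (0:ℝ), c * f s t)
      = fun s : ℝ => c * ∫ t in Set.Ioi (0:ℝ), f s t := by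
    funext s
    exact integral_const_mul c _
  rw [h1]
  exact integral_const_mul c _

lemma intHalf_congr {f g : ℝ → ℝ → ℝ} (h : ∀ s t : ℝ, 0 ≤ t → f s t = g s t) :
    intHalf f = intHalf g := by
  show (∫ s : ℝ, ∫ t in Set.Ioi (0:ℝ), f s t) = ∫ s : ℝ, ∫ t in Set.Ioi (0:ℝ), g s t
  have h1 : (fun s : ℝ => ∫ t in Set.Ioi (0:ℝ), f s t)
      = fun s : ℝ => ∫ t in Set.Ioi (0:ℝ), g s t := by
    funext s
    exact setIntegral_congr_fun measurableSet_Ioi (fun t ht => h s t (le_of_lt ht))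
  rw [h1]

lemma keyS {f : ℝ → ℝ → ℝ} (hf : Dec f) (hc : Continuous (fun p : ℝ × ℝ => f p.1 p.2))
    (hz : ∀ t : ℝ, 0 < t → (∫ s : ℝ, f s t) = 0) : intHalf f = 0 := by
  have hint : Integrable (Function.uncurry f)
      ((volume : Measure ℝ).prod (volume.restrict (Set.Ioi 0))) :=
    integrable_of_Dec hf hc
  show (∫ s : ℝ, ∫ t in Set.Ioi (0:ℝ), f s t) = 0
  rw [MeasureTheory.integral_integral_swap hint]
  have h1 : (∫ t in Set.Ioi (0:ℝ), ∫ s : ℝ, f s t)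
      = ∫ t in Set.Ioi (0:ℝ), (0:ℝ) :=
    setIntegral_congr_fun measurableSet_Ioi (fun t ht => hz t ht)
  rw [h1]
  simp

end Vu1Aux

/-- Lemma 5.1: if `(H(θ) − σ) v = λ u − g`, then
`2 sin θ ∫ V_θ v u = ∫ ∂_s g · u`. -/
theorem Vu1_identity (θ : ℝ) (hθ : θ ∈ Set.Ioo 0 (π/2))
    (u : ℝ → ℝ → ℝ) (σ : ℝ) (hu : IsModelEigen θ u σ)
    (lam : ℝ) (g : ℝ → ℝ → ℝ)
    (hgsmooth : ∀ n : ℕ, ContDiff ℝ n (fun p : ℝ × ℝ => g p.1 p.2))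
    (hgschwartz : SchwartzHalf g)
    (v : ℝ → ℝ → ℝ) (hvsmooth : ∀ n : ℕ, ContDiff ℝ n (fun p : ℝ × ℝ => v p.1 p.2))
    (hvschwartz : SchwartzHalf v) (hvneumann : ∀ s : ℝ, pd2 v s 0 = 0)
    (hvsol : ∀ s t : ℝ, 0 ≤ t → Hop θ v s t - σ * v s t = lam * u s t - g s t) :
    2 * Real.sin θ * intHalf (fun s t => Vpot θ s t * v s t * u s t) =
      intHalf (fun s t => pd1 g s t * u s t) := by
  classical
  open Vu1Aux in
  have hsu : Vu1Aux.Sm u := hu.smooth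
  have hsv : Vu1Aux.Sm v := hvsmooth
  have hsg : Vu1Aux.Sm g := hgsmooth
  -- decay of derivatives
  have du : Vu1Aux.Dec u := Vu1Aux.schwartzHalf_dec hu.schwartz 0 0
  have du1 : Vu1Aux.Dec (pd1 u) := Vu1Aux.schwartzHalf_dec hu.schwartz 1 0
  have du2 : Vu1Aux.Dec (pd1 (pd1 u)) := Vu1Aux.schwartzHalf_dec hu.schwartz 2 0
  have du3 : Vu1Aux.Dec (pd1 (pd1 (pd1 u))) := Vu1Aux.schwartzHalf_dec hu.schwartz 3 0
  have du11 : Vu1Aux.Dec (pd1 (pd2 u)) := Vu1Aux.schwartzHalf_dec hu.schwartz 1 1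
  have du12 : Vu1Aux.Dec (pd1 (pd2 (pd2 u))) := Vu1Aux.schwartzHalf_dec hu.schwartz 1 2
  have dv : Vu1Aux.Dec v := Vu1Aux.schwartzHalf_dec hvschwartz 0 0
  have dv1 : Vu1Aux.Dec (pd1 v) := Vu1Aux.schwartzHalf_dec hvschwartz 1 0
  have dv11 : Vu1Aux.Dec (pd1 (pd1 v)) := Vu1Aux.schwartzHalf_dec hvschwartz 2 0
  have dv2 : Vu1Aux.Dec (pd2 v) := Vu1Aux.schwartzHalf_dec hvschwartz 0 1
  have dv22 : Vu1Aux.Dec (pd2 (pd2 v)) := Vu1Aux.schwartzHalf_dec hvschwartz 0 2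
  have dg : Vu1Aux.Dec g := Vu1Aux.schwartzHalf_dec hgschwartz 0 0
  have dg1 : Vu1Aux.Dec (pd1 g) := Vu1Aux.schwartzHalf_dec hgschwartz 1 0
  -- commutation of partial derivatives
  have hcomm1 : pd2 (pd1 u) = pd1 (pd2 u) := (Vu1Aux.pd12_comm hsu).symm
  have hcomm2 : pd2 (pd2 (pd1 u)) = pd1 (pd2 (pd2 u)) := by
    rw [hcomm1]
    exact (Vu1Aux.pd12_comm hsu.pd2).symm
  have dwt : Vu1Aux.Dec (pd2 (pd1 u)) := by rw [hcomm1]; exact du11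
  have dw2 : Vu1Aux.Dec (pd2 (pd2 (pd1 u))) := by rw [hcomm2]; exact du12
  -- Neumann condition for `pd1 u`
  have hwn : ∀ s : ℝ, pd2 (pd1 u) s 0 = 0 := by
    intro s
    rw [hcomm1]
    show deriv (fun x => pd2 u x 0) s = 0
    have hz : (fun x => pd2 u x 0) = fun _ => (0:ℝ) := funext hu.neumann
    rw [hz, deriv_const]
  -- Step 1: the eigen-equation differentiated in `s`
  have hstep1 : ∀ s t : ℝ, 0 ≤ t →
      Hop θ (pd1 u) s t - σ * pd1 u s t
        = 2 * Real.sin θ * (Vpot θ s t * u s t) := by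
    intro s t ht
    have hL : (fun x => Hop θ u x t - σ * u x t) = fun _ => (0:ℝ) := by
      funext x; rw [hu.eigen x t ht]; ring
    have hA : HasDerivAt (fun x => pd1 (pd1 u) x t) (pd1 (pd1 (pd1 u)) s t) s :=
      Vu1Aux.hasDerivAt1 hsu.pd1.pd1 s t
    have hB : HasDerivAt (fun x => pd2 (pd2 u) x t) (pd1 (pd2 (pd2 u)) s t) s :=
      Vu1Aux.hasDerivAt1 hsu.pd2.pd2 s t
    have hV : HasDerivAt (fun x => Vpot θ x t) (-Real.sin θ) s := Vu1Aux.hasDerivAt_V θ t s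
    have hVsq : HasDerivAt (fun x => (Vpot θ x t)^2)
        (2 * Vpot θ s t * (-Real.sin θ)) s := by
      have := hV.pow 2
      norm_num at this
      exact this.congr_deriv (by ring)
    have hU : HasDerivAt (fun x => u x t) (pd1 u s t) s := Vu1Aux.hasDerivAt1 hsu s t
    have hD : HasDerivAt (fun x => Hop θ u x t - σ * u x t)
        (-(pd1 (pd1 (pd1 u)) s t) - pd1 (pd2 (pd2 u)) s t
          + (2 * Vpot θ s t * (-Real.sin θ) * u s t + (Vpot θ s t)^2 * pd1 u s t)
          - σ * pd1 u s t) s := by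
      have h := ((hA.neg.sub hB).add (hVsq.mul hU)).sub (hU.const_mul σ)
      exact h
    have hzero : HasDerivAt (fun x => Hop θ u x t - σ * u x t) 0 s := by
      rw [hL]; exact hasDerivAt_const s 0
    have hE := hD.unique hzero
    have hrw : pd2 (pd2 (pd1 u)) s t = pd1 (pd2 (pd2 u)) s t := by rw [hcomm2]
    simp only [Hop]
    rw [hrw]
    linear_combination hE
  -- Green's identity, `s`-part
  have hGA : intHalf (fun s t =>
      pd1 (pd1 v) s t * pd1 u s t - v s t * pd1 (pd1 (pd1 u)) s t) = 0 := by
    apply Vu1Aux.keyS ((dv11.mul du1).sub (dv.mul du3))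
      (((Vu1Aux.Sm.cont2 hsv.pd1.pd1).mul (Vu1Aux.Sm.cont2 hsu.pd1)).sub
        ((Vu1Aux.Sm.cont2 hsv).mul (Vu1Aux.Sm.cont2 hsu.pd1.pd1.pd1)))
    intro t ht
    have h1 := Vu1Aux.lineS hsv.pd1 hsu.pd1 dv1 du1 dv11 du2 ht.le
    have h2 := Vu1Aux.lineS hsv hsu.pd1.pd1 dv du2 dv1 du3 ht.le
    have hi1 : Integrable (fun s => pd1 (pd1 v) s t * pd1 u s t
        + pd1 v s t * pd1 (pd1 u) s t) :=
      (Vu1Aux.intS (dv11.mul du1)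
        ((Vu1Aux.Sm.cont2 hsv.pd1.pd1).mul (Vu1Aux.Sm.cont2 hsu.pd1)) ht.le).add
      (Vu1Aux.intS (dv1.mul du2)
        ((Vu1Aux.Sm.cont2 hsv.pd1).mul (Vu1Aux.Sm.cont2 hsu.pd1.pd1)) ht.le)
    have hi2 : Integrable (fun s => pd1 v s t * pd1 (pd1 u) s t
        + v s t * pd1 (pd1 (pd1 u)) s t) :=
      (Vu1Aux.intS (dv1.mul du2)
        ((Vu1Aux.Sm.cont2 hsv.pd1).mul (Vu1Aux.Sm.cont2 hsu.pd1.pd1)) ht.le).add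
      (Vu1Aux.intS (dv.mul du3)
        ((Vu1Aux.Sm.cont2 hsv).mul (Vu1Aux.Sm.cont2 hsu.pd1.pd1.pd1)) ht.le)
    have hsplit : (fun s => pd1 (pd1 v) s t * pd1 u s t - v s t * pd1 (pd1 (pd1 u)) s t)
        = fun s => (pd1 (pd1 v) s t * pd1 u s t + pd1 v s t * pd1 (pd1 u) s t)
          - (pd1 v s t * pd1 (pd1 u) s t + v s t * pd1 (pd1 (pd1 u)) s t) := by
      funext s; ring
    rw [hsplit, integral_sub hi1 hi2, h1, h2, sub_zero]
  -- Green's identity, `t`-part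
  have hGB : intHalf (fun s t =>
      pd2 (pd2 v) s t * pd1 u s t - v s t * pd2 (pd2 (pd1 u)) s t) = 0 := by
    have hz : ∀ s : ℝ, (∫ t in Set.Ioi (0:ℝ),
        (pd2 (pd2 v) s t * pd1 u s t - v s t * pd2 (pd2 (pd1 u)) s t)) = 0 := by
      intro s
      have h1 := Vu1Aux.lineT hsv.pd2 hsu.pd1 dv2 du1 dv22 dwt s
      have h2 := Vu1Aux.lineT hsv hsu.pd1.pd2 dv dwt dv2 dw2 s
      have h1' : (∫ t in Set.Ioi (0:ℝ),
          (pd2 (pd2 v) s t * pd1 u s t + pd2 v s t * pd2 (pd1 u) s t)) = 0 := by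
        rw [h1, hvneumann s]; ring
      have h2' : (∫ t in Set.Ioi (0:ℝ),
          (pd2 v s t * pd2 (pd1 u) s t + v s t * pd2 (pd2 (pd1 u)) s t)) = 0 := by
        rw [h2, hwn s]; ring
      have hi1 : IntegrableOn (fun t => pd2 (pd2 v) s t * pd1 u s t
          + pd2 v s t * pd2 (pd1 u) s t) (Set.Ioi 0) :=
        (Vu1Aux.intT (dv22.mul du1)
          ((Vu1Aux.Sm.cont2 hsv.pd2.pd2).mul (Vu1Aux.Sm.cont2 hsu.pd1)) s).add
        (Vu1Aux.intT (dv2.mul dwt)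
          ((Vu1Aux.Sm.cont2 hsv.pd2).mul (Vu1Aux.Sm.cont2 hsu.pd1.pd2)) s)
      have hi2 : IntegrableOn (fun t => pd2 v s t * pd2 (pd1 u) s t
          + v s t * pd2 (pd2 (pd1 u)) s t) (Set.Ioi 0) :=
        (Vu1Aux.intT (dv2.mul dwt)
          ((Vu1Aux.Sm.cont2 hsv.pd2).mul (Vu1Aux.Sm.cont2 hsu.pd1.pd2)) s).add
        (Vu1Aux.intT (dv.mul dw2)
          ((Vu1Aux.Sm.cont2 hsv).mul (Vu1Aux.Sm.cont2 hsu.pd1.pd2.pd2)) s)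
      have hsplit : (fun t => pd2 (pd2 v) s t * pd1 u s t - v s t * pd2 (pd2 (pd1 u)) s t)
          = fun t => (pd2 (pd2 v) s t * pd1 u s t + pd2 v s t * pd2 (pd1 u) s t)
            - (pd2 v s t * pd2 (pd1 u) s t + v s t * pd2 (pd2 (pd1 u)) s t) := by
        funext t; ring
      rw [hsplit, integral_sub hi1 hi2, h1', h2', sub_zero]
    show (∫ s : ℝ, ∫ t in Set.Ioi (0:ℝ),
        (pd2 (pd2 v) s t * pd1 u s t - v s t * pd2 (pd2 (pd1 u)) s t)) = 0
    have hz' : (fun s : ℝ => ∫ t in Set.Ioi (0:ℝ),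
        (pd2 (pd2 v) s t * pd1 u s t - v s t * pd2 (pd2 (pd1 u)) s t))
        = fun _ => (0:ℝ) := funext hz
    rw [hz']
    simp
  -- ∫ u ∂_s u = 0
  have hUW : intHalf (fun s t => u s t * pd1 u s t) = 0 := by
    apply Vu1Aux.keyS (du.mul du1)
      ((Vu1Aux.Sm.cont2 hsu).mul (Vu1Aux.Sm.cont2 hsu.pd1))
    intro t ht
    have h1 := Vu1Aux.lineS hsu hsu du du du1 du1 ht.le
    have h2 : (∫ s : ℝ, (2:ℝ) * (u s t * pd1 u s t)) = 0 := by
      have hsplit : (fun s => (2:ℝ) * (u s t * pd1 u s t))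
          = fun s => pd1 u s t * u s t + u s t * pd1 u s t := by
        funext s; ring
      rw [hsplit]; exact h1
    rw [integral_const_mul] at h2
    linarith
  -- ∫ (∂_s g) u + g (∂_s u) = 0
  have hGW : intHalf (fun s t => pd1 g s t * u s t + g s t * pd1 u s t) = 0 := by
    apply Vu1Aux.keyS ((dg1.mul du).add (dg.mul du1))
      (((Vu1Aux.Sm.cont2 hsg.pd1).mul (Vu1Aux.Sm.cont2 hsu)).add
        ((Vu1Aux.Sm.cont2 hsg).mul (Vu1Aux.Sm.cont2 hsu.pd1)))
    intro t ht
    exact Vu1Aux.lineS hsg hsu dg du dg1 du1 ht.le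
  -- integrability of the elementary products on the half plane
  have hVc : Continuous (fun p : ℝ × ℝ => Vpot θ p.1 p.2) := by
    simp only [Vpot]
    exact (continuous_snd.mul continuous_const).sub (continuous_fst.mul continuous_const)
  have iP1 : Integrable (fun p : ℝ × ℝ => u p.1 p.2 * pd1 u p.1 p.2) Vu1Aux.μH :=
    Vu1Aux.integrable_of_Dec (du.mul du1)
      ((Vu1Aux.Sm.cont2 hsu).mul (Vu1Aux.Sm.cont2 hsu.pd1))
  have iP2 : Integrable (fun p : ℝ × ℝ => g p.1 p.2 * pd1 u p.1 p.2) Vu1Aux.μH :=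
    Vu1Aux.integrable_of_Dec (dg.mul du1)
      ((Vu1Aux.Sm.cont2 hsg).mul (Vu1Aux.Sm.cont2 hsu.pd1))
  have iP3 : Integrable (fun p : ℝ × ℝ => pd1 g p.1 p.2 * u p.1 p.2) Vu1Aux.μH :=
    Vu1Aux.integrable_of_Dec (dg1.mul du)
      ((Vu1Aux.Sm.cont2 hsg.pd1).mul (Vu1Aux.Sm.cont2 hsu))
  have dVvu : Vu1Aux.Dec (fun s t => Vpot θ s t * v s t * u s t) :=
    ((dv.mul du).vmul θ).congr (fun s t => by ring)
  have iP4 : Integrable (fun p : ℝ × ℝ => Vpot θ p.1 p.2 * v p.1 p.2 * u p.1 p.2)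
      Vu1Aux.μH :=
    Vu1Aux.integrable_of_Dec dVvu
      ((hVc.mul (Vu1Aux.Sm.cont2 hsv)).mul (Vu1Aux.Sm.cont2 hsu))
  have iP5 : Integrable (fun p : ℝ × ℝ => pd1 (pd1 v) p.1 p.2 * pd1 u p.1 p.2) Vu1Aux.μH :=
    Vu1Aux.integrable_of_Dec (dv11.mul du1)
      ((Vu1Aux.Sm.cont2 hsv.pd1.pd1).mul (Vu1Aux.Sm.cont2 hsu.pd1))
  have iP6 : Integrable (fun p : ℝ × ℝ => v p.1 p.2 * pd1 (pd1 (pd1 u)) p.1 p.2) Vu1Aux.μH :=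
    Vu1Aux.integrable_of_Dec (dv.mul du3)
      ((Vu1Aux.Sm.cont2 hsv).mul (Vu1Aux.Sm.cont2 hsu.pd1.pd1.pd1))
  have iP7 : Integrable (fun p : ℝ × ℝ => pd2 (pd2 v) p.1 p.2 * pd1 u p.1 p.2) Vu1Aux.μH :=
    Vu1Aux.integrable_of_Dec (dv22.mul du1)
      ((Vu1Aux.Sm.cont2 hsv.pd2.pd2).mul (Vu1Aux.Sm.cont2 hsu.pd1))
  have iP8 : Integrable (fun p : ℝ × ℝ => v p.1 p.2 * pd2 (pd2 (pd1 u)) p.1 p.2) Vu1Aux.μH :=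
    Vu1Aux.integrable_of_Dec (dv.mul dw2)
      ((Vu1Aux.Sm.cont2 hsv).mul (Vu1Aux.Sm.cont2 hsu.pd1.pd2.pd2))
  -- the pointwise Green identity
  have hpt : ∀ s t : ℝ, 0 ≤ t →
      (lam * (u s t * pd1 u s t)
        - (pd1 g s t * u s t + g s t * pd1 u s t)
        - 2 * Real.sin θ * (Vpot θ s t * v s t * u s t)
        + (pd1 (pd1 v) s t * pd1 u s t - v s t * pd1 (pd1 (pd1 u)) s t)
        + (pd2 (pd2 v) s t * pd1 u s t - v s t * pd2 (pd2 (pd1 u)) s t))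
      = (-1) * (pd1 g s t * u s t) := by
    intro s t ht
    have h1 := hvsol s t ht
    have h2 := hstep1 s t ht
    simp only [Hop] at h1 h2
    linear_combination (-(pd1 u s t)) * h1 + (v s t) * h2
  -- put everything together
  have hdecomp :
      intHalf (fun s t =>
        lam * (u s t * pd1 u s t)
        - (pd1 g s t * u s t + g s t * pd1 u s t)
        - 2 * Real.sin θ * (Vpot θ s t * v s t * u s t)
        + (pd1 (pd1 v) s t * pd1 u s t - v s t * pd1 (pd1 (pd1 u)) s t)
        + (pd2 (pd2 v) s t * pd1 u s t - v s t * pd2 (pd2 (pd1 u)) s t))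
      = lam * intHalf (fun s t => u s t * pd1 u s t)
        - intHalf (fun s t => pd1 g s t * u s t + g s t * pd1 u s t)
        - 2 * Real.sin θ * intHalf (fun s t => Vpot θ s t * v s t * u s t)
        + intHalf (fun s t => pd1 (pd1 v) s t * pd1 u s t - v s t * pd1 (pd1 (pd1 u)) s t)
        + intHalf (fun s t => pd2 (pd2 v) s t * pd1 u s t - v s t * pd2 (pd2 (pd1 u)) s t) := by
    rw [Vu1Aux.intHalf_add
      ((((iP1.const_mul lam).sub (iP3.add iP2)).sub (iP4.const_mul (2 * Real.sin θ))).add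
        (iP5.sub iP6))
      (iP7.sub iP8)]
    rw [Vu1Aux.intHalf_add
      (((iP1.const_mul lam).sub (iP3.add iP2)).sub (iP4.const_mul (2 * Real.sin θ)))
      (iP5.sub iP6)]
    rw [Vu1Aux.intHalf_sub
      ((iP1.const_mul lam).sub (iP3.add iP2))
      (iP4.const_mul (2 * Real.sin θ))]
    rw [Vu1Aux.intHalf_sub (iP1.const_mul lam) (iP3.add iP2)]
    rw [Vu1Aux.intHalf_const_mul lam (fun s t => u s t * pd1 u s t)]
    rw [Vu1Aux.intHalf_const_mul (2 * Real.sin θ) (fun s t => Vpot θ s t * v s t * u s t)]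
  have hleft :
      intHalf (fun s t =>
        lam * (u s t * pd1 u s t)
        - (pd1 g s t * u s t + g s t * pd1 u s t)
        - 2 * Real.sin θ * (Vpot θ s t * v s t * u s t)
        + (pd1 (pd1 v) s t * pd1 u s t - v s t * pd1 (pd1 (pd1 u)) s t)
        + (pd2 (pd2 v) s t * pd1 u s t - v s t * pd2 (pd2 (pd1 u)) s t))
      = (-1) * intHalf (fun s t => pd1 g s t * u s t) := by
    rw [Vu1Aux.intHalf_congr hpt]
    exact Vu1Aux.intHalf_const_mul (-1) (fun s t => pd1 g s t * u s t)
  rw [hdecomp, hUW, hGW, hGA, hGB] at hleft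
  linarith [hleft]
end
end
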